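/- arXiv:1204.4778 — 11 statements merged into one kernel-verified Lean document; each statement's English description precedes it below -/
import Mathlib

section
/- Let K be a field, V an n-dimensional K-vector space (n ≥ 1) with basis ε_1, …, ε_n, and T_1, …, T_n ∈ GL(V) generalised reflections such that for each i the image of T_i − 1 equals the line K ε_i, such that (T_i − 1)(ε_{i+1}) = b_i ε_i with b_i ≠ 0 for all 1 ≤ i ≤ n−1, and (T_i − 1)(ε_{i−1}) = a_i ε_i with a_i ≠ 0 for all 2 ≤ i ≤ n. Let Δ be the subgroup of GL(V) generated by T_1, …, T_n and let V^Δ = {v ∈ V : γ v = v for all γ ∈ Δ}. Then every Δ-invariant K-subspace W of V with W ≠ V is contained in V^Δ; consequently, every Δ-invariant subspace of the quotient Δ-module V/V^Δ is either 0 or all of V/V^Δ. -/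
/-- Let `K` be a field, `V` an `n`-dimensional `K`-vector space (`n ≥ 1`)
with basis `ε`, and `T i` generalised reflections (image of `T i - 1` equals the line `K • ε i`)
with `(T i - 1)(ε (i+1)) = b i • ε i`, `b i ≠ 0`, and `(T i - 1)(ε (i-1)) = a i • ε i`, `a i ≠ 0`.
Let `Δ` be the subgroup generated by the `T i` and `Vfix` the space of `Δ`-invariant vectors.
Then every `Δ`-invariant subspace `W ≠ V` is contained in `Vfix`; consequently every
`Δ`-invariant subspace of `V / Vfix` (equivalently, every invariant subspace of `V`
containing `Vfix`) is either trivial or everything. -/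
theorem stmt_0 (K : Type*) [Field K] (V : Type*) [AddCommGroup V] [Module K V]
    (n : ℕ) (hn : 1 ≤ n) (ε : Module.Basis (Fin n) K V)
    (T : Fin n → V ≃ₗ[K] V)
    (hrange : ∀ i, LinearMap.range ((T i).toLinearMap - LinearMap.id) =
      Submodule.span K {ε i})
    (hb : ∀ i j : Fin n, (i : ℕ) + 1 = (j : ℕ) →
      ∃ b : K, b ≠ 0 ∧ (T i) (ε j) - ε j = b • ε i)
    (ha : ∀ i j : Fin n, (j : ℕ) + 1 = (i : ℕ) →
      ∃ a : K, a ≠ 0 ∧ (T i) (ε j) - ε j = a • ε i)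
    (Δ : Subgroup (V ≃ₗ[K] V)) (hΔ : Δ = Subgroup.closure (Set.range T))
    (Vfix : Submodule K V) (hVfix : ∀ v : V, v ∈ Vfix ↔ ∀ γ ∈ Δ, γ v = v) :
    (∀ W : Submodule K V, (∀ γ ∈ Δ, ∀ w ∈ W, γ w ∈ W) → W ≠ ⊤ → W ≤ Vfix) ∧
    (∀ U : Submodule K V, Vfix ≤ U → (∀ γ ∈ Δ, ∀ u ∈ U, γ u ∈ U) →
      U = Vfix ∨ U = ⊤) := by
  -- generators belong to Δ
  have hTmem : ∀ i, T i ∈ Δ := by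
    intro i
    rw [hΔ]
    exact Subgroup.subset_closure (Set.mem_range_self i)
  -- fixed by generators → fixed by Δ
  have hfix : ∀ v : V, (∀ i, T i v = v) → ∀ γ ∈ Δ, γ v = v := by
    intro v hv γ hγ
    rw [hΔ] at hγ
    induction hγ using Subgroup.closure_induction with
    | mem x hx =>
      obtain ⟨i, rfl⟩ := hx
      exact hv i
    | one => rfl
    | mul x y hx hy ihx ihy =>
      show x (y v) = v
      rw [ihy, ihx]
    | inv x hx ih =>
      show x⁻¹ v = v
      calc x⁻¹ v = x⁻¹ (x v) := by rw [ih]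
        _ = (x⁻¹ * x) v := rfl
        _ = v := by rw [inv_mul_cancel]; rfl
  -- key: an invariant W containing some ε i is ⊤
  have hkey : ∀ W : Submodule K V, (∀ γ ∈ Δ, ∀ w ∈ W, γ w ∈ W) →
      ∀ i : Fin n, ε i ∈ W → W = ⊤ := by
    intro W hW i0 hi0
    -- adjacency step
    have step : ∀ i j : Fin n, ((i : ℕ) + 1 = (j : ℕ) ∨ (j : ℕ) + 1 = (i : ℕ)) →
        ε i ∈ W → ε j ∈ W := by
      intro i j hij hi
      have : ∃ c : K, c ≠ 0 ∧ (T j) (ε i) - ε i = c • ε j := by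
        rcases hij with h | h
        · exact ha j i h
        · exact hb j i h
      obtain ⟨c, hc, hcEq⟩ := this
      have hmem : (T j) (ε i) - ε i ∈ W :=
        W.sub_mem (hW (T j) (hTmem j) _ hi) hi
      rw [hcEq] at hmem
      have := W.smul_mem c⁻¹ hmem
      rwa [smul_smul, inv_mul_cancel₀ hc, one_smul] at this
    -- all basis vectors lie in W
    have hall : ∀ j : Fin n, ε j ∈ W := by
      have main : ∀ m : ℕ, ∀ j : Fin n,
          ((j : ℕ) = (i0 : ℕ) + m ∨ (i0 : ℕ) = (j : ℕ) + m) → ε j ∈ W := by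
        intro m
        induction m with
        | zero =>
          intro j hj
          have : (j : ℕ) = (i0 : ℕ) := by omega
          have : j = i0 := Fin.ext this
          rwa [this]
        | succ m ih =>
          intro j hj
          rcases hj with h | h
          · have hm : (i0 : ℕ) + m < n := by omega
            set k : Fin n := ⟨(i0 : ℕ) + m, hm⟩
            have hk : ε k ∈ W := ih k (Or.inl rfl)
            exact step k j (Or.inl (by simp [k]; omega)) hk
          · have hm : (j : ℕ) + 1 < n := by omega
            set k : Fin n := ⟨(j : ℕ) + 1, hm⟩
            have hk : ε k ∈ W := ih k (Or.inr (by simp [k]; omega))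
            exact step k j (Or.inr (by simp [k])) hk
      intro j
      rcases le_or_gt (i0 : ℕ) (j : ℕ) with h | h
      · exact main ((j : ℕ) - (i0 : ℕ)) j (Or.inl (by omega))
      · exact main ((i0 : ℕ) - (j : ℕ)) j (Or.inr (by omega))
    rw [eq_top_iff, ← ε.span_eq]
    exact Submodule.span_le.mpr (by rintro x ⟨j, rfl⟩; exact hall j)
  have part1 : ∀ W : Submodule K V, (∀ γ ∈ Δ, ∀ w ∈ W, γ w ∈ W) → W ≠ ⊤ → W ≤ Vfix := by
    intro W hW hWne w hw
    rw [hVfix]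
    apply hfix
    intro i
    have hmem : (T i) w - w ∈ Submodule.span K {ε i} := by
      rw [← hrange i]
      exact ⟨w, rfl⟩
    obtain ⟨c, hc⟩ := Submodule.mem_span_singleton.mp hmem
    by_cases hc0 : c = 0
    · exact sub_eq_zero.mp (by rw [← hc, hc0, zero_smul])
    · exfalso
      apply hWne
      apply hkey W hW i
      have hmemW : (T i) w - w ∈ W := W.sub_mem (hW (T i) (hTmem i) _ hw) hw
      rw [← hc] at hmemW
      have := W.smul_mem c⁻¹ hmemW
      rwa [smul_smul, inv_mul_cancel₀ hc0, one_smul] at this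
  refine ⟨part1, ?_⟩
  intro U hle hU
  by_cases h : U = ⊤
  · exact Or.inr h
  · exact Or.inl (le_antisymm (part1 U hU h) hle)
end

section
/- Let K be a field, V an n-dimensional K-vector space (n ≥ 1) with basis ε_1, …, ε_n, and T_1, …, T_n ∈ GL(V) generalised reflections such that for each i the image of T_i − 1 equals the line K ε_i, such that (T_i − 1)(ε_{i+1}) = b_i ε_i with b_i ≠ 0 for all 1 ≤ i ≤ n−1, (T_i − 1)(ε_{i−1}) = a_i ε_i with a_i ≠ 0 for all 2 ≤ i ≤ n, and additionally T_i(ε_j) = ε_j whenever |i − j| ≥ 2. Let Δ be the subgroup of GL(V) generated by T_1, …, T_n. Then the space V^Δ = {v ∈ V : γ v = v for all γ ∈ Δ} of Δ-invariant vectors has dimension at most one over K. -/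
/-- With the setup of Statement 0, assuming additionally that
`T i (ε j) = ε j` whenever `|i - j| ≥ 2`, the space `Vfix` of `Δ`-invariant vectors
has dimension at most one over `K`. -/
theorem stmt_1 (K : Type*) [Field K] (V : Type*) [AddCommGroup V] [Module K V]
    (n : ℕ) (hn : 1 ≤ n) (ε : Module.Basis (Fin n) K V)
    (T : Fin n → V ≃ₗ[K] V)
    (hrange : ∀ i, LinearMap.range ((T i).toLinearMap - LinearMap.id) =
      Submodule.span K {ε i})
    (hb : ∀ i j : Fin n, (i : ℕ) + 1 = (j : ℕ) →
      ∃ b : K, b ≠ 0 ∧ (T i) (ε j) - ε j = b • ε i)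
    (ha : ∀ i j : Fin n, (j : ℕ) + 1 = (i : ℕ) →
      ∃ a : K, a ≠ 0 ∧ (T i) (ε j) - ε j = a • ε i)
    (hfar : ∀ i j : Fin n, ((i : ℕ) + 2 ≤ (j : ℕ) ∨ (j : ℕ) + 2 ≤ (i : ℕ)) →
      (T i) (ε j) = ε j)
    (Δ : Subgroup (V ≃ₗ[K] V)) (hΔ : Δ = Subgroup.closure (Set.range T))
    (Vfix : Submodule K V) (hVfix : ∀ v : V, v ∈ Vfix ↔ ∀ γ ∈ Δ, γ v = v) :
    Module.finrank K Vfix ≤ 1 := by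
  classical
  -- every (T i)(ε j) - ε j is a multiple of ε i
  have he : ∀ i j : Fin n, ∃ c : K, (T i) (ε j) - ε j = c • ε i := by
    intro i j
    have hmem : (T i) (ε j) - ε j ∈
        LinearMap.range ((T i).toLinearMap - LinearMap.id) := ⟨ε j, rfl⟩
    rw [hrange i] at hmem
    rcases Submodule.mem_span_singleton.mp hmem with ⟨c, hc⟩
    exact ⟨c, hc.symm⟩
  choose e hee using he
  have hsmulinj : ∀ i : Fin n, Function.Injective (fun c : K => c • ε i) := by
    intro i
    exact smul_left_injective K (ε.ne_zero i)
  have hezero : ∀ i j : Fin n, ((i : ℕ) + 2 ≤ (j : ℕ) ∨ (j : ℕ) + 2 ≤ (i : ℕ)) →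
      e i j = 0 := by
    intro i j hij
    have h0 : e i j • ε i = (0 : K) • ε i := by
      rw [← hee i j, hfar i j hij, sub_self, zero_smul]
    exact hsmulinj i h0
  have hTmem : ∀ i, (T i) ∈ Δ := by
    intro i
    rw [hΔ]
    exact Subgroup.subset_closure ⟨i, rfl⟩
  -- the key coordinate relation for fixed vectors
  have key : ∀ v ∈ Vfix, ∀ i : Fin n, (∑ j, ε.repr v j * e i j) = 0 := by
    intro v hv i
    have hTv : (T i) v = v := (hVfix v).mp hv _ (hTmem i)
    have h1 : (T i) v - v = (∑ j, ε.repr v j * e i j) • ε i := by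
      conv_lhs => rw [← ε.sum_repr v]
      rw [map_sum, ← Finset.sum_sub_distrib]
      rw [Finset.sum_smul]
      refine Finset.sum_congr rfl ?_
      intro j _
      rw [map_smul, ← smul_sub, hee i j, smul_smul, mul_comm]

    rw [hTv, sub_self] at h1
    have := (hsmulinj i (a₁ := ∑ j, ε.repr v j * e i j) (a₂ := 0)
      (by simpa using h1.symm))
    exact this
  -- the injection into K
  have hinj : ∀ v ∈ Vfix, ε.repr v ⟨0, hn⟩ = 0 → v = 0 := by
    intro v hv h0
    have hcoef : ∀ m : ℕ, ∀ hm : m < n, ε.repr v ⟨m, hm⟩ = 0 := by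
      intro m
      induction m using Nat.strong_induction_on with
      | _ m IH =>
        intro hm
        match m, hm with
        | 0, hm => exact h0
        | Nat.succ k, hm =>
          have hk : k < n := Nat.lt_of_succ_lt hm
          have hrel := key v hv ⟨k, hk⟩
          have hsingle : (∑ j, ε.repr v j * e ⟨k, hk⟩ j) =
              ε.repr v ⟨k + 1, hm⟩ * e ⟨k, hk⟩ ⟨k + 1, hm⟩ := by
            refine Finset.sum_eq_single _ ?_ (by simp)
            intro j _ hj
            rcases lt_or_gt_of_ne (fun h : (j : ℕ) = k + 1 => hj (Fin.ext h)) with h | h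
            · have : ε.repr v j = 0 := by
                have := IH j h j.isLt
                simpa [Fin.eta] using this
              rw [this, zero_mul]
            · have : e ⟨k, hk⟩ j = 0 := hezero _ _ (Or.inl (by simp; omega))
              rw [this, mul_zero]
          rw [hsingle] at hrel
          obtain ⟨b, hb0, hbe⟩ := hb ⟨k, hk⟩ ⟨k + 1, hm⟩ rfl
          have heb : e ⟨k, hk⟩ ⟨k + 1, hm⟩ = b := by
            apply hsmulinj ⟨k, hk⟩
            simp only
            rw [← hee, hbe]
          rw [heb] at hrel
          rcases mul_eq_zero.mp hrel with h | h
          · exact h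
          · exact absurd h hb0
    have : ∀ i : Fin n, ε.coord i v = 0 := by
      intro i
      have := hcoef i i.isLt
      simpa [Module.Basis.coord_apply, Fin.eta] using this
    exact ε.forall_coord_eq_zero_iff.mp this
  -- build the linear injection Vfix →ₗ K
  let f : Vfix →ₗ[K] K := (ε.coord ⟨0, hn⟩).comp Vfix.subtype
  have hfinj : Function.Injective f := by
    rw [← LinearMap.ker_eq_bot]
    rw [LinearMap.ker_eq_bot']
    rintro ⟨v, hv⟩ hfv
    have : v = 0 := hinj v hv (by simpa [f, Module.Basis.coord_apply] using hfv)
    exact Subtype.ext this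
  calc Module.finrank K Vfix ≤ Module.finrank K K :=
        LinearMap.finrank_le_finrank_of_injective hfinj
    _ = 1 := Module.finrank_self K
end

section
/- Let n ≥ 2 and for 2 ≤ j ≤ n let E_{1j} denote the n×n complex matrix with entry 1 in position (1, j) and 0 elsewhere. Let X be an n×n complex matrix with trace zero. Then X commutes with E_{1j} for every 2 ≤ j ≤ n if and only if X lies in the linear span of {E_{1j} : 2 ≤ j ≤ n}. In other words, the centralizer in sl_n(ℂ) of the Lie subalgebra 𝔲 spanned by the E_{1j} (2 ≤ j ≤ n) is equal to 𝔲 itself. -/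
open Matrix

/-- For `n ≥ 2` and a traceless `n × n` complex matrix `X`, `X` commutes
with all the elementary matrices `E 0 j` (`j ≠ 0`) if and only if `X` lies in their span:
the centraliser in `sl_n(ℂ)` of the Lie subalgebra `𝔲` spanned by the `E 0 j` is `𝔲`. -/
theorem stmt_4 (n : ℕ) (hn : 2 ≤ n) (X : Matrix (Fin n) (Fin n) ℂ)
    (hX : X.trace = 0) :
    (∀ j : Fin n, j ≠ ⟨0, by omega⟩ →
        X * Matrix.single ⟨0, by omega⟩ j 1 =
          Matrix.single ⟨0, by omega⟩ j 1 * X) ↔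
      X ∈ Submodule.span ℂ {M : Matrix (Fin n) (Fin n) ℂ |
        ∃ j : Fin n, j ≠ ⟨0, by omega⟩ ∧ M = Matrix.single ⟨0, by omega⟩ j 1} := by
  set z : Fin n := ⟨0, by omega⟩ with hzdef
  constructor
  · intro h
    -- X a z = 0 for a ≠ z
    have hcol : ∀ a : Fin n, a ≠ z → X a z = 0 := by
      intro a ha
      obtain ⟨j, hj⟩ : ∃ j : Fin n, j ≠ z := ⟨a, ha⟩
      have := congrFun (congrFun (h j hj) a) j
      simpa [ha] using this
    have hrow : ∀ j : Fin n, j ≠ z → ∀ b : Fin n, b ≠ j → X j b = 0 := by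
      intro j hj b hb
      have := congrFun (congrFun (h j hj) z) b
      simpa [hb] using this.symm
    have hdiag : ∀ j : Fin n, j ≠ z → X j j = X z z := by
      intro j hj
      have := congrFun (congrFun (h j hj) z) j
      simpa using this.symm
    have hzz : X z z = 0 := by
      have htr : X.trace = (n : ℂ) * X z z := by
        rw [Matrix.trace]
        have : ∀ i : Fin n, X.diag i = X z z := by
          intro i
          by_cases hi : i = z
          · simp [Matrix.diag, hi]
          · simpa [Matrix.diag] using hdiag i hi
        rw [Finset.sum_congr rfl (fun i _ => this i)]
        simp [mul_comm]
      rw [hX] at htr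
      have hn' : (n : ℂ) ≠ 0 := Nat.cast_ne_zero.mpr (by omega)
      exact ((mul_eq_zero.mp htr.symm).resolve_left hn')
    have hXeq : X = ∑ j ∈ Finset.univ.filter (· ≠ z),
        X z j • Matrix.single z j (1 : ℂ) := by
      ext a b
      rw [Matrix.sum_apply]
      by_cases ha : a = z
      · subst ha
        by_cases hb : b = z
        · rw [hb, hzz]
          refine (Finset.sum_eq_zero ?_).symm
          intro x hx
          simp only [Finset.mem_filter, Finset.mem_univ, true_and] at hx
          simp [Matrix.single, hx]
        · rw [Finset.sum_eq_single b]
          · simp [Matrix.single]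
          · intro x _ hxb
            simp [Matrix.single, hxb]
          · intro hb'
            simp [hb] at hb'
      · have hab : X a b = 0 := by
          by_cases hb : b = z
          · rw [hb]; exact hcol a ha
          · by_cases hba : b = a
            · rw [hba, hdiag a ha, hzz]
            · exact hrow a ha b hba
        rw [hab]
        refine (Finset.sum_eq_zero ?_).symm
        intro x _
        simp [Matrix.single, Ne.symm ha]
    rw [hXeq]
    apply Submodule.sum_mem
    intro j hj
    simp only [Finset.mem_filter, Finset.mem_univ, true_and] at hj
    exact Submodule.smul_mem _ _ (Submodule.subset_span ⟨j, hj, rfl⟩)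
  · intro hmem j hj
    clear hX
    induction hmem using Submodule.span_induction with
    | mem M hM =>
      obtain ⟨k, hk, rfl⟩ := hM
      simp [hk, hj]
    | zero => simp
    | add M N _ _ hM hN => rw [add_mul, mul_add, hM, hN]
    | smul c M _ hM => rw [Algebra.smul_mul_assoc, Algebra.mul_smul_comm, hM]
end

section
/- Let V be a finite-dimensional complex vector space with dim V ≥ 3, let W and W' be two distinct subspaces of V of codimension one, and let v, v' ∈ V be linearly independent vectors such that V = W ⊕ ℂv and V = W' ⊕ ℂv'. Let S_W = {g ∈ GL(V) : det g = 1, g v = v, g(W) ⊆ W} and S_{W'} = {g ∈ GL(V) : det g = 1, g v' = v', g(W') ⊆ W'}. Then the subgroup of GL(V) generated by S_W ∪ S_{W'} is the full special linear group SL(V) = {g ∈ GL(V) : det g = 1}. -/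
open Module Matrix Submodule Matrix.TransvectionStruct

namespace Stmt6

variable {K : Type*} [Field K] {V : Type*} [AddCommGroup V] [Module K V]




/-- The linear transvection endomorphism `x ↦ x + f x • u`. -/
noncomputable def tvMap (f : Module.Dual K V) (u : V) : V →ₗ[K] V :=
  LinearMap.id + f.smulRight u

lemma tvMap_apply (f : Module.Dual K V) (u x : V) : tvMap f u x = x + f x • u := rfl

open scoped Classical in
/-- The linear transvection automorphism `x ↦ x + f x • u`, defined when `f u = 0`
(and as the identity otherwise). -/
noncomputable def tvE (f : Module.Dual K V) (u : V) : V ≃ₗ[K] V :=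
  if h : f u = 0 then
    LinearEquiv.ofLinear (tvMap f u) (tvMap (-f) u)
      (by ext x; simp [tvMap_apply, h, smul_smul, LinearMap.comp_apply])
      (by ext x; simp [tvMap_apply, h, smul_smul, LinearMap.comp_apply])
  else 1

lemma tvE_apply {f : Module.Dual K V} {u : V} (h : f u = 0) (x : V) :
    tvE f u x = x + f x • u := by
  simp [tvE, h, tvMap_apply]

lemma tvE_symm_apply {f : Module.Dual K V} {u : V} (h : f u = 0) (x : V) :
    (tvE f u).symm x = x - f x • u := by
  simp [tvE, h, tvMap_apply, sub_eq_add_neg]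

lemma tvE_zero_left (u : V) : tvE (0 : Module.Dual K V) u = 1 := by
  ext x; simp [tvE_apply (by simp : (0 : Module.Dual K V) u = 0)]

lemma tvE_zero_right (f : Module.Dual K V) : tvE f (0 : V) = 1 := by
  ext x; simp [tvE_apply (map_zero f)]

lemma tvE_mul_left {f g : Module.Dual K V} {u : V} (hf : f u = 0) (hg : g u = 0) :
    tvE f u * tvE g u = tvE (f + g) u := by
  ext x
  have hfg : (f + g) u = 0 := by simp [hf, hg]
  show tvE f u (tvE g u x) = _
  rw [tvE_apply hg, tvE_apply hf, tvE_apply hfg]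
  simp [hg, hf, add_smul]
  module

lemma tvE_mul_right {f : Module.Dual K V} {u u' : V} (hu : f u = 0) (hu' : f u' = 0) :
    tvE f u * tvE f u' = tvE f (u + u') := by
  ext x
  show tvE f u (tvE f u' x) = _
  rw [tvE_apply hu', tvE_apply hu, tvE_apply (by simp [hu, hu'])]
  simp [hu']
  module

lemma tvE_conj {f : Module.Dual K V} {u : V} (h : f u = 0) (g : V ≃ₗ[K] V) :
    g * tvE f u * g⁻¹ = tvE (f ∘ₗ (g.symm : V →ₗ[K] V)) (g u) := by
  have h2 : (f ∘ₗ (g.symm : V →ₗ[K] V)) (g u) = 0 := by simp [h]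
  ext x
  show g (tvE f u (g.symm x)) = tvE (f ∘ₗ (g.symm : V →ₗ[K] V)) (g u) x
  rw [tvE_apply h, tvE_apply h2, map_add]
  simp only [LinearEquiv.map_smul, LinearEquiv.apply_symm_apply]
  rfl

lemma tvE_smul {f : Module.Dual K V} {u : V} (c : K) (h : f u = 0) :
    tvE (c • f) u = tvE f (c • u) := by
  ext x
  rw [tvE_apply (by simp [h]), tvE_apply (by simp [h])]
  simp [smul_smul, mul_comm]


lemma tvE_toLinearMap {f : Module.Dual K V} {u : V} (h : f u = 0) :
    (tvE f u : V →ₗ[K] V) = tvMap f u := by simp [tvE, h]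

lemma tvE_inv {f : Module.Dual K V} {u : V} (h : f u = 0) :
    (tvE f u)⁻¹ = tvE f (-u) := by
  have h2 : tvE f u * tvE f (-u) = 1 := by
    rw [tvE_mul_right h (by simp [h]), add_neg_cancel, tvE_zero_right]
  exact (eq_inv_of_mul_eq_one_right h2).symm

lemma tvMap_det [FiniteDimensional K V] (f : Module.Dual K V) (u : V) (h : f u = 0) :
    LinearMap.det (tvMap f u) = 1 := by
  classical
  let b := Module.finBasis K V
  have hM : LinearMap.toMatrix b b (tvMap f u)
      = 1 + replicateCol Unit (fun i => b.repr u i) * replicateRow Unit (fun j => f (b j)) := by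
    ext i j
    rw [LinearMap.toMatrix_apply, tvMap_apply]
    simp [Matrix.mul_apply, Matrix.one_apply, Finsupp.single_apply, eq_comm, mul_comm]
  rw [← LinearMap.det_toMatrix b, hM, det_one_add_replicateCol_mul_replicateRow]
  have h3 : (fun j => f (b j)) ⬝ᵥ (fun i => b.repr u i) = f u := by
    rw [dotProduct]
    rw [show f u = f (Finset.univ.sum fun i => b.repr u i • b i) by rw [Basis.sum_repr]]
    rw [map_sum]
    simp [mul_comm]
  rw [h3, h, add_zero]

lemma tvE_det [FiniteDimensional K V] {f : Module.Dual K V} {u : V} (h : f u = 0) :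
    LinearMap.det ((tvE f u : V ≃ₗ[K] V) : V →ₗ[K] V) = 1 := by
  rw [tvE_toLinearMap h]; exact tvMap_det f u h


lemma exists_dual_of_notMem (U : Submodule K V) (x : V) (hx : x ∉ U) (c : K) :
    ∃ f : Module.Dual K V, f x = c ∧ ∀ y ∈ U, f y = 0 := by
  obtain ⟨f, hfx, hfU⟩ := U.exists_dual_map_eq_bot_of_notMem hx inferInstance
  refine ⟨(c / f x) • f, ?_, ?_⟩
  · simp [div_mul_cancel₀ _ hfx]
  · intro y hy
    have : f y = 0 := by
      have : f y ∈ U.map f := Submodule.mem_map_of_mem hy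
      rw [hfU] at this
      simpa using this
    simp [this]

lemma exists_mem_notMem_notMem (W U₁ U₂ : Submodule K V) (h₁ : ¬ W ≤ U₁) (h₂ : ¬ W ≤ U₂) :
    ∃ x, x ∈ W ∧ x ∉ U₁ ∧ x ∉ U₂ := by
  obtain ⟨a, haW, ha1⟩ := Set.not_subset.1 h₁
  obtain ⟨b, hbW, hb2⟩ := Set.not_subset.1 h₂
  by_cases ha2 : a ∉ U₂
  · exact ⟨a, haW, ha1, ha2⟩
  by_cases hb1 : b ∉ U₁
  · exact ⟨b, hbW, hb1, hb2⟩
  push_neg at ha2 hb1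
  refine ⟨a + b, add_mem haW hbW, ?_, ?_⟩
  · intro h; exact ha1 (by simpa using sub_mem h hb1)
  · intro h; exact hb2 (by simpa using sub_mem h ha2)

lemma finrank_span_pair_le [FiniteDimensional K V] (x y : V) :
    finrank K (span K ({x, y} : Set V)) ≤ 2 := by
  have h : span K ({x, y} : Set V) = span K {x} ⊔ span K {y} := by
    rw [← Submodule.span_union, Set.singleton_union]
  rw [h]
  calc finrank K ↥(span K ({x} : Set V) ⊔ span K ({y} : Set V))
      ≤ finrank K (span K ({x} : Set V)) + finrank K (span K ({y} : Set V)) :=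
        Submodule.finrank_add_le_finrank_add_finrank _ _
    _ ≤ 1 + 1 := by
        gcongr
        · simpa using finrank_span_le_card (R := K) ({x} : Set V)
        · simpa using finrank_span_le_card (R := K) ({y} : Set V)
    _ = 2 := rfl

lemma finrank_span_single_le [FiniteDimensional K V] (x : V) :
    finrank K (span K ({x} : Set V)) ≤ 1 := by
  simpa using finrank_span_le_card (R := K) ({x} : Set V)


section MatrixPart
variable {n : Type*} [Fintype n] [DecidableEq n]
open Finset
open scoped Classical

lemma diag_block (i j : n) (hij : i ≠ j) (a : K) (ha : a ≠ 0) :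
    ∃ L : List (TransvectionStruct n K),
      (L.map toMatrix).prod = diagonal (fun k => if k = i then a else if k = j then a⁻¹ else 1) := by
  refine ⟨[⟨i,j,hij,a⟩, ⟨j,i,hij.symm,-a⁻¹⟩, ⟨i,j,hij,a⟩, ⟨i,j,hij,-1⟩, ⟨j,i,hij.symm,1⟩, ⟨i,j,hij,-1⟩], ?_⟩
  simp only [List.map_cons, List.map_nil, List.prod_cons, List.prod_nil, mul_one,
    toMatrix_mk]
  have expand : ∀ c : K, transvection i j c = 1 + Matrix.single i j c := fun c => rfl
  have expand' : ∀ c : K, transvection j i c = 1 + Matrix.single j i c := fun c => rfl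
  simp only [expand, expand']
  simp only [Matrix.mul_add, Matrix.add_mul, Matrix.one_mul, Matrix.mul_one,
    single_mul_single_same, single_mul_single_of_ne, hij, hij.symm, ne_eq, not_false_eq_true,
    add_zero, zero_add, Matrix.mul_zero, Matrix.zero_mul]
  ext p q
  by_cases hp : p = i <;> by_cases hq : q = i <;> by_cases hp' : p = j <;> by_cases hq' : q = j <;>
    subst_vars <;>
    simp_all [diagonal_apply, one_apply, single_apply_same, single_apply_of_ne,
      hij, hij.symm, Ne.symm] <;> field_simp <;> ring
lemma diag_prod (N : ℕ) : ∀ (d : n → K), (univ.filter fun k => d k ≠ 1).card ≤ N →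
    ∏ i, d i = 1 →
    ∃ L : List (TransvectionStruct n K), (L.map toMatrix).prod = diagonal d := by
  induction N with
  | zero =>
    intro d hcard _
    have : ∀ k, d k = 1 := by
      intro k
      by_contra hk
      have hm : k ∈ univ.filter fun k => d k ≠ 1 := by simp [hk]
      have := card_pos.2 ⟨k, hm⟩
      omega
    exact ⟨[], by simp [funext this, diagonal_one]⟩
  | succ N ih =>
    intro d hcard hprod
    by_cases hall : ∀ k, d k = 1
    · exact ⟨[], by simp [funext hall, diagonal_one]⟩
    push_neg at hall
    obtain ⟨i, hi⟩ := hall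
    have hne0 : ∀ k, d k ≠ 0 := by
      intro k hk
      rw [Finset.prod_eq_zero (mem_univ k) hk] at hprod
      exact zero_ne_one hprod
    have hj : ∃ j, j ≠ i ∧ d j ≠ 1 := by
      by_contra hj
      push_neg at hj
      have heq : ∏ k, d k = d i := by
        rw [← Finset.prod_subset (Finset.subset_univ {i})]
        · simp
        · intro x _ hx
          simp only [mem_singleton] at hx
          exact hj x hx
      rw [heq] at hprod; exact hi hprod
    obtain ⟨j, hji, hj1⟩ := hj
    set d' : n → K := Function.update (Function.update d i 1) j (d i * d j) with hd'
    have hd'i : d' i = 1 := by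
      rw [hd', Function.update_of_ne (Ne.symm hji), Function.update_self]
    have hd'j : d' j = d i * d j := by rw [hd', Function.update_self]
    have hd'k : ∀ k, k ≠ i → k ≠ j → d' k = d k := by
      intro k hki hkj
      rw [hd', Function.update_of_ne hkj, Function.update_of_ne hki]
    -- the factorization
    have hfact : diagonal d =
        diagonal (fun k => if k = i then d i else if k = j then (d i)⁻¹ else 1) * diagonal d' := by
      rw [diagonal_mul_diagonal]
      refine congrArg diagonal (funext fun k => ?_)
      by_cases hki : k = i
      · subst hki; simp [hd'i]
      by_cases hkj : k = j
      · subst hkj; rw [if_neg hki, if_pos rfl, hd'j, ← mul_assoc, inv_mul_cancel₀ (hne0 i), one_mul]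
      · rw [if_neg hki, if_neg hkj, hd'k k hki hkj, one_mul]
    have hcard' : (univ.filter fun k => d' k ≠ 1).card ≤ N := by
      have hsub : (univ.filter fun k => d' k ≠ 1) ⊆ (univ.filter fun k => d k ≠ 1).erase i := by
        intro k hk
        simp only [mem_filter, mem_univ, true_and] at hk
        rw [mem_erase]
        have hki : k ≠ i := by rintro rfl; exact hk hd'i
        refine ⟨hki, ?_⟩
        simp only [mem_filter, mem_univ, true_and]
        by_cases hkj : k = j
        · subst hkj; exact hj1
        · rw [← hd'k k hki hkj]; exact hk
      have hmemi : i ∈ univ.filter fun k => d k ≠ 1 := by simp [hi]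
      have := card_le_card hsub
      rw [card_erase_of_mem hmemi] at this
      omega
    have hprod' : ∏ k, d' k = 1 := by
      have himem : i ∈ univ.erase j := mem_erase.2 ⟨Ne.symm hji, mem_univ i⟩
      have e1 : ∏ k, d' k = (d i * d j) * ∏ k ∈ (univ.erase j).erase i, d k := by
        rw [hd', Finset.prod_update_of_mem (mem_univ j), Finset.sdiff_singleton_eq_erase,
          Finset.prod_update_of_mem himem, Finset.sdiff_singleton_eq_erase, one_mul]
      have e2 : ∏ k, d k = d j * (d i * ∏ k ∈ (univ.erase j).erase i, d k) := by
        rw [Finset.mul_prod_erase _ _ himem, Finset.mul_prod_erase _ _ (mem_univ j)]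
      rw [e1, ← hprod, e2]; ring
    obtain ⟨L₁, hL₁⟩ := diag_block i j (Ne.symm hji) (d i) (hne0 i)
    obtain ⟨L₂, hL₂⟩ := ih d' hcard' hprod'
    exact ⟨L₁ ++ L₂, by rw [List.map_append, List.prod_append, hL₁, hL₂, ← hfact]⟩

lemma det_one_prod_transvec (M : Matrix n n K) (hM : M.det = 1) :
    ∃ L : List (TransvectionStruct n K), (L.map toMatrix).prod = M := by
  obtain ⟨L, L', D, h⟩ := Matrix.Pivot.exists_list_transvec_mul_diagonal_mul_list_transvec M
  have hD : ∏ i, D i = 1 := by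
    have := congrArg Matrix.det h
    rw [hM, det_mul, det_mul, det_toMatrix_prod, det_toMatrix_prod, det_diagonal] at this
    simpa using this.symm
  obtain ⟨L'', hL''⟩ := diag_prod (univ.filter fun k => D k ≠ 1).card D le_rfl hD
  refine ⟨L ++ L'' ++ L', ?_⟩
  rw [List.map_append, List.map_append, List.prod_append, List.prod_append, hL'', ← h]

end MatrixPart
lemma toMatrix_tvMap {n : Type*} [Fintype n] [DecidableEq n] (b : Basis n K V)
    (i j : n) (c : K) :
    LinearMap.toMatrix b b (tvMap (c • b.coord j) (b i)) = transvection i j c := by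
  ext p q
  rw [LinearMap.toMatrix_apply, tvMap_apply]
  simp only [map_add, LinearMap.smul_apply, Basis.coord_apply, Basis.repr_self, _root_.map_smul,
    Finsupp.coe_add, Pi.add_apply, Finsupp.single_apply, Finsupp.smul_apply, smul_eq_mul,
    transvection, Matrix.add_apply, Matrix.one_apply, Matrix.single, of_apply]
  by_cases h1 : q = p <;> by_cases h2 : j = q <;> by_cases h3 : i = p <;>
    simp_all [eq_comm] <;> ring

lemma det_one_mem_closure_tvE [FiniteDimensional K V] (g : V ≃ₗ[K] V)
    (hg : LinearMap.det (g : V →ₗ[K] V) = 1) :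
    g ∈ Subgroup.closure {e : V ≃ₗ[K] V | ∃ (f : Module.Dual K V) (u : V), f u = 0 ∧ e = tvE f u} := by
  classical
  set b := Module.finBasis K V with hb
  obtain ⟨L, hL⟩ := det_one_prod_transvec (LinearMap.toMatrix b b (g : V →ₗ[K] V))
    (by rw [← LinearMap.det_toMatrix b] at hg; exact hg)
  have hcond : ∀ t : TransvectionStruct (Fin (finrank K V)) K,
      (t.c • b.coord t.j) (b t.i) = 0 := by
    intro t
    rw [LinearMap.smul_apply, Basis.coord_apply, Basis.repr_self, Finsupp.single_apply,
      if_neg t.hij, smul_zero]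
  set E : TransvectionStruct (Fin (finrank K V)) K → (V ≃ₗ[K] V) :=
    fun t => tvE (t.c • b.coord t.j) (b t.i) with hE
  have key : ∀ t : TransvectionStruct (Fin (finrank K V)) K,
      (E t : V →ₗ[K] V) = tvMap (t.c • b.coord t.j) (b t.i) :=
    fun t => tvE_toLinearMap (hcond t)
  have hgeq : g = (L.map E).prod := by
    apply LinearEquiv.toLinearMap_injective
    apply (LinearMap.toMatrixAlgEquiv b).injective
    have h2 : (((L.map E).prod : V ≃ₗ[K] V) : V →ₗ[K] V)
        = (L.map fun t => tvMap (t.c • b.coord t.j) (b t.i)).prod := by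
      show LinearEquiv.automorphismGroup.toLinearMapMonoidHom (R := K) (M := V) (L.map E).prod = _
      rw [map_list_prod, List.map_map]
      congr 1
      exact List.map_congr_left fun t _ => key t
    rw [h2, map_list_prod, List.map_map]
    have h4 : (L.map ((LinearMap.toMatrixAlgEquiv b) ∘ fun t => tvMap (t.c • b.coord t.j) (b t.i)))
        = L.map toMatrix := by
      refine List.map_congr_left fun t _ => ?_
      show LinearMap.toMatrixAlgEquiv b (tvMap (t.c • b.coord t.j) (b t.i)) = t.toMatrix
      cases t with
      | mk i j hij c =>
        show LinearMap.toMatrix b b (tvMap (c • b.coord j) (b i)) = _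
        rw [toMatrix_tvMap, toMatrix_mk]
    rw [h4, hL]
    rfl
  rw [hgeq]
  refine Subgroup.list_prod_mem _ ?_
  intro e he
  rw [List.mem_map] at he
  obtain ⟨t, _, rfl⟩ := he
  exact Subgroup.subset_closure ⟨_, _, hcond t, rfl⟩


section Core
variable [FiniteDimensional K V]

/-- Step "aux2": all transvections with direction in `W` lie in `H`, given the
pure `φ`-transvections and the `S_W`-generators. -/
lemma tvE_mem_of_dir_mem {W : Submodule K V} {v : V} {φ : Module.Dual K V}
    (hφW : ∀ w ∈ W, φ w = 0) (hφv : φ v = 1)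
    {H : Subgroup (V ≃ₗ[K] V)}
    (hZ : ∀ w ∈ W, tvE φ w ∈ H)
    (hGen : ∀ (f : Module.Dual K V) (u : V), u ∈ W → f v = 0 → f u = 0 → tvE f u ∈ H)
    {u : V} (hu : u ∈ W) {f : Module.Dual K V} (hfu : f u = 0) : tvE f u ∈ H := by
  have hφu : φ u = 0 := hφW u hu
  have h1 : tvE (f - f v • φ) u ∈ H :=
    hGen _ u hu (by simp [hφv]) (by simp [hfu, hφu])
  have h2 : tvE ((f v) • φ) u = tvE φ (f v • u) := tvE_smul _ hφu
  have h3 : tvE φ (f v • u) ∈ H := hZ _ (Submodule.smul_mem _ _ hu)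
  have h4 : tvE (f - f v • φ) u * tvE ((f v) • φ) u = tvE f u := by
    rw [tvE_mul_left (by simp [hfu, hφu]) (by simp [hφu]), sub_add_cancel]
  rw [← h4]; exact mul_mem h1 (h2 ▸ h3)

/-- Step "aux1": the pure `φ`-transvections with direction in `W` lie in `H`. -/
lemma tvE_phi_mem
    (hdim : 3 ≤ finrank K V) {W W' : Submodule K V}
    (hWc : finrank K W = finrank K V - 1) (hW'c : finrank K W' = finrank K V - 1)
    {v v' : V} {φ : Module.Dual K V}
    (hφW : ∀ w ∈ W, φ w = 0) (hφv : φ v = 1)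
    (hvW : v ∉ W) (hv'v : v' ∉ span K {v})
    (hW'W : ¬ W' ≤ W)
    (hdecW : ∀ x : V, ∃ w ∈ W, ∃ c : K, x = w + c • v)
    {H : Subgroup (V ≃ₗ[K] V)}
    (hGenW : ∀ (f : Module.Dual K V) (u : V), u ∈ W → f v = 0 → f u = 0 → tvE f u ∈ H)
    (hGenW' : ∀ (f : Module.Dual K V) (u : V), u ∈ W' → f v' = 0 → f u = 0 → tvE f u ∈ H) :
    ∀ w ∈ W, tvE φ w ∈ H := by
  have hv'0 : v' ≠ 0 := fun h => hv'v (h ▸ zero_mem _)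
  have hWrank : 2 ≤ finrank K W := by
    have := finrank_le (R := K) W  -- unused, just ensure
    omega
  have hW'rank : 2 ≤ finrank K W' := by omega
  -- C1 : an element of H moving v' into W
  obtain ⟨g₀, hg₀H, hg₀v'⟩ : ∃ g₀ ∈ H, g₀ v' ∈ W := by
    by_cases hv'W : v' ∈ W
    · exact ⟨1, one_mem _, by simpa using hv'W⟩
    obtain ⟨w₁, hw₁, c, hdecv'⟩ := hdecW v'
    have hc : c ≠ 0 := by
      rintro rfl; rw [zero_smul, add_zero] at hdecv'; exact hv'W (hdecv' ▸ hw₁)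
    obtain ⟨u₁, hu₁W', hu₁W⟩ := Set.not_subset.1 hW'W
    obtain ⟨p, hp, q, hdecu₁⟩ := hdecW u₁
    have hq : q ≠ 0 := by
      rintro rfl; rw [zero_smul, add_zero] at hdecu₁; exact hu₁W (hdecu₁ ▸ hp)
    have hn1 : ¬ W ≤ span K {u₁, v'} := by
      intro hle
      have heq := Submodule.eq_of_le_of_finrank_le hle
        (le_trans (finrank_span_pair_le u₁ v') (by omega))
      exact hu₁W (heq ▸ Submodule.subset_span (by simp))
    have hn2 : ¬ W ≤ span K {v, v'} := by
      intro hle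
      have heq := Submodule.eq_of_le_of_finrank_le hle
        (le_trans (finrank_span_pair_le v v') (by omega))
      exact hvW (heq ▸ Submodule.subset_span (by simp))
    obtain ⟨u₂, hu₂W, hu₂n1, hu₂n2⟩ := exists_mem_notMem_notMem W _ _ hn1 hn2
    have hv'span : v' ∉ span K {v, u₂} := by
      intro h
      rw [Submodule.mem_span_pair] at h
      obtain ⟨a, b, hab⟩ := h
      by_cases hb : b = 0
      · rw [hb, zero_smul, add_zero] at hab
        exact hv'v (hab ▸ Submodule.smul_mem _ a (Submodule.mem_span_singleton_self v))
      · apply hu₂n2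
        rw [Submodule.mem_span_pair]
        exact ⟨-(a/b), 1/b, by rw [← hab]; match_scalars <;> field_simp <;> ring⟩
    obtain ⟨f₂, hf₂v', hf₂0⟩ := exists_dual_of_notMem (span K {v, u₂}) v' hv'span 1
    have hf₂v : f₂ v = 0 := hf₂0 v (Submodule.subset_span (by simp))
    have hf₂u₂ : f₂ u₂ = 0 := hf₂0 u₂ (Submodule.subset_span (by simp))
    obtain ⟨f₁, hf₁u₂, hf₁0⟩ := exists_dual_of_notMem (span K {u₁, v'}) u₂ hu₂n1 (-(c/q))
    have hf₁u₁ : f₁ u₁ = 0 := hf₁0 u₁ (Submodule.subset_span (by simp))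
    have hf₁v' : f₁ v' = 0 := hf₁0 v' (Submodule.subset_span (by simp))
    refine ⟨tvE f₁ u₁ * tvE f₂ u₂,
      mul_mem (hGenW' f₁ u₁ hu₁W' hf₁v' hf₁u₁) (hGenW f₂ u₂ hu₂W hf₂v hf₂u₂), ?_⟩
    have e1 : tvE f₂ u₂ v' = v' + u₂ := by rw [tvE_apply hf₂u₂, hf₂v', one_smul]
    have e2 : tvE f₁ u₁ (v' + u₂) = v' + u₂ + (-(c/q)) • u₁ := by
      rw [tvE_apply hf₁u₁, map_add, hf₁v', hf₁u₂, zero_add]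
    have e3 : (tvE f₁ u₁ * tvE f₂ u₂) v' = w₁ + u₂ + (-(c/q)) • p := by
      show tvE f₁ u₁ (tvE f₂ u₂ v') = _
      rw [e1, e2, hdecv', hdecu₁]
      match_scalars <;> field_simp <;> ring
    rw [e3]
    exact add_mem (add_mem hw₁ hu₂W) (Submodule.smul_mem _ _ hp)
  -- C2a : a nonzero w₀ ∈ W with tvE φ w₀ ∈ H
  obtain ⟨w₀, hw₀W, hw₀0, hw₀H⟩ : ∃ w₀ ∈ W, w₀ ≠ 0 ∧ tvE φ w₀ ∈ H := by
    set X : Submodule K V := W'.map (g₀ : V →ₗ[K] V) with hX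
    have hXrank : finrank K X = finrank K V - 1 := by
      rw [hX, LinearEquiv.finrank_map_eq g₀ W', hW'c]
    have hinf : 0 < finrank K ↥(W ⊓ X) := by
      have h1 := Submodule.finrank_sup_add_finrank_inf_eq W X
      have h2 : finrank K ↥(W ⊔ X) ≤ finrank K V := Submodule.finrank_le _
      omega
    have hnb : W ⊓ X ≠ ⊥ := by
      intro h; rw [h] at hinf; simp at hinf
    obtain ⟨w₀, hw₀mem, hw₀0⟩ := Submodule.exists_mem_ne_zero_of_ne_bot hnb
    obtain ⟨hw₀W, hw₀X⟩ := Submodule.mem_inf.1 hw₀mem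
    obtain ⟨u₀, hu₀W', hu₀⟩ := Submodule.mem_map.1 hw₀X
    have hfu₀ : (φ ∘ₗ (g₀ : V →ₗ[K] V)) u₀ = 0 := by
      simp only [LinearMap.comp_apply, LinearEquiv.coe_coe]
      rw [show g₀ u₀ = w₀ from hu₀]
      exact hφW w₀ hw₀W
    have hτ₀ : tvE (φ ∘ₗ (g₀ : V →ₗ[K] V)) u₀ ∈ H := by
      refine hGenW' _ u₀ hu₀W' ?_ hfu₀
      simp only [LinearMap.comp_apply, LinearEquiv.coe_coe]
      exact hφW _ hg₀v'
    have hconj := tvE_conj hfu₀ g₀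
    have hcomp : (φ ∘ₗ (g₀ : V →ₗ[K] V)) ∘ₗ (g₀.symm : V →ₗ[K] V) = φ := by
      ext x; simp
    rw [hcomp, show g₀ u₀ = w₀ from hu₀] at hconj
    exact ⟨w₀, hw₀W, hw₀0, hconj ▸ mul_mem (mul_mem hg₀H hτ₀) (inv_mem hg₀H)⟩
  -- C2b : propagate to all of W
  have hstep : ∀ u, u ∈ W → u ∉ span K {w₀} → tvE φ u ∈ H := by
    intro u huW hun
    have hw₀uv : w₀ ∉ span K {v, u} := by
      intro h
      rw [Submodule.mem_span_pair] at h
      obtain ⟨a, b, hab⟩ := h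
      have hav : a • v ∈ W := by
        have : a • v = w₀ - b • u := by rw [← hab]; abel
        rw [this]; exact sub_mem hw₀W (Submodule.smul_mem _ _ huW)
      have ha : a = 0 := by
        by_contra ha
        exact hvW (by rw [← inv_smul_smul₀ ha v]; exact Submodule.smul_mem _ _ hav)
      rw [ha, zero_smul, zero_add] at hab
      have hb : b ≠ 0 := by rintro rfl; rw [zero_smul] at hab; exact hw₀0 hab.symm
      exact hun (by rw [Submodule.mem_span_singleton]
                    exact ⟨b⁻¹, by rw [← hab, smul_smul, inv_mul_cancel₀ hb, one_smul]⟩)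
    obtain ⟨f, hfw₀, hf0⟩ := exists_dual_of_notMem (span K {v, u}) w₀ hw₀uv 1
    have hfv : f v = 0 := hf0 v (Submodule.subset_span (by simp))
    have hfu : f u = 0 := hf0 u (Submodule.subset_span (by simp))
    have hh : tvE f u ∈ H := hGenW f u huW hfv hfu
    have hconj := tvE_conj (show φ w₀ = 0 from hφW _ hw₀W) (tvE f u)
    have hcomp : φ ∘ₗ ((tvE f u).symm : V →ₗ[K] V) = φ := by
      ext x
      simp only [LinearMap.comp_apply, LinearEquiv.coe_coe]
      rw [tvE_symm_apply hfu, map_sub, _root_.map_smul]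
      simp [hφW u huW]
    have happ : tvE f u w₀ = w₀ + u := by rw [tvE_apply hfu, hfw₀, one_smul]
    rw [hcomp, happ] at hconj
    have hmem : tvE φ (w₀ + u) ∈ H := hconj ▸ mul_mem (mul_mem hh hw₀H) (inv_mem hh)
    have hneg : tvE φ (-w₀) ∈ H := (tvE_inv (hφW _ hw₀W)) ▸ inv_mem hw₀H
    have := mul_mem hneg hmem
    rwa [tvE_mul_right (by simp [hφW _ hw₀W]) (by simp [hφW _ hw₀W, hφW _ huW]),
      neg_add_cancel_left] at this
  intro w hwW
  by_cases hwspan : w ∈ span K {w₀}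
  · have hnle : ¬ W ≤ span K {w₀} := by
      intro hle
      have h1 := Submodule.finrank_mono hle
      have h2 := finrank_span_single_le (K := K) w₀
      omega
    obtain ⟨u₁, hu₁W, hu₁n⟩ := Set.not_subset.1 hnle
    have h1 : tvE φ (w + u₁) ∈ H := by
      refine hstep _ (add_mem hwW hu₁W) ?_
      intro h
      exact hu₁n (by simpa using sub_mem h hwspan)
    have h2 : tvE φ (-u₁) ∈ H := by
      refine hstep _ (neg_mem hu₁W) ?_
      intro h
      exact hu₁n (by simpa using neg_mem h)
    have := mul_mem h1 h2
    rwa [tvE_mul_right (by simp [hφW _ hwW, hφW _ hu₁W]) (by simp [hφW _ hu₁W]),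
      add_neg_cancel_right] at this
  · exact hstep w hwW hwspan


/-- The hard direction: every determinant-one automorphism lies in the subgroup generated by
the two special linear subgroups. -/
lemma hard (hdim : 3 ≤ finrank K V)
    (W W' : Submodule K V) (hne : W ≠ W')
    (hWc : finrank K W = finrank K V - 1) (hW'c : finrank K W' = finrank K V - 1)
    (v v' : V) (hli : LinearIndependent K ![v, v'])
    (hW : IsCompl W (span K {v})) (hW' : IsCompl W' (span K {v'}))
    (g : V ≃ₗ[K] V) (hg : LinearMap.det g.toLinearMap = 1) :
    g ∈ Subgroup.closure
        ({g : V ≃ₗ[K] V | LinearMap.det g.toLinearMap = 1 ∧ g v = v ∧ ∀ w ∈ W, g w ∈ W} ∪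
         {g : V ≃ₗ[K] V | LinearMap.det g.toLinearMap = 1 ∧ g v' = v' ∧ ∀ w ∈ W', g w ∈ W'}) := by
  set H := Subgroup.closure
        ({g : V ≃ₗ[K] V | LinearMap.det g.toLinearMap = 1 ∧ g v = v ∧ ∀ w ∈ W, g w ∈ W} ∪
         {g : V ≃ₗ[K] V | LinearMap.det g.toLinearMap = 1 ∧ g v' = v' ∧ ∀ w ∈ W', g w ∈ W'})
    with hH
  -- independence facts
  obtain ⟨hv'0, hvv'⟩ := linearIndependent_fin2.1 hli
  simp only [Matrix.cons_val_one, Matrix.head_cons, Matrix.cons_val_zero] at hv'0 hvv'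
  have hv0 : v ≠ 0 := by
    rintro rfl; exact hvv' 0 (by simp)
  have hvv'span : v ∉ span K {v'} := by
    intro h
    obtain ⟨a, ha⟩ := Submodule.mem_span_singleton.1 h
    exact hvv' a ha
  have hv'v : v' ∉ span K {v} := by
    intro h
    obtain ⟨a, ha⟩ := Submodule.mem_span_singleton.1 h
    have ha0 : a ≠ 0 := by rintro rfl; rw [zero_smul] at ha; exact hv'0 ha.symm
    exact hvv' a⁻¹ (by rw [← ha, smul_smul, inv_mul_cancel₀ ha0, one_smul])
  -- v ∉ W etc.
  have hvW : v ∉ W := by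
    intro h
    have : v ∈ W ⊓ span K {v} := Submodule.mem_inf.2 ⟨h, Submodule.mem_span_singleton_self v⟩
    rw [hW.inf_eq_bot] at this
    exact hv0 (by simpa using this)
  have hv'W' : v' ∉ W' := by
    intro h
    have : v' ∈ W' ⊓ span K {v'} := Submodule.mem_inf.2 ⟨h, Submodule.mem_span_singleton_self v'⟩
    rw [hW'.inf_eq_bot] at this
    exact hv'0 (by simpa using this)
  -- decompositions
  have hdecW : ∀ x : V, ∃ w ∈ W, ∃ c : K, x = w + c • v := by
    intro x
    have hx : x ∈ W ⊔ span K {v} := by rw [hW.sup_eq_top]; trivial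
    obtain ⟨y, hy, z, hz, hyz⟩ := Submodule.mem_sup.1 hx
    obtain ⟨c, rfl⟩ := Submodule.mem_span_singleton.1 hz
    exact ⟨y, hy, c, hyz.symm⟩
  have hdecW' : ∀ x : V, ∃ w ∈ W', ∃ c : K, x = w + c • v' := by
    intro x
    have hx : x ∈ W' ⊔ span K {v'} := by rw [hW'.sup_eq_top]; trivial
    obtain ⟨y, hy, z, hz, hyz⟩ := Submodule.mem_sup.1 hx
    obtain ⟨c, rfl⟩ := Submodule.mem_span_singleton.1 hz
    exact ⟨y, hy, c, hyz.symm⟩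
  -- mutual non-inclusion
  have hW'W : ¬ W' ≤ W := by
    intro hle
    exact hne (Submodule.eq_of_le_of_finrank_le hle (by omega)).symm
  have hWW' : ¬ W ≤ W' := by
    intro hle
    exact hne (Submodule.eq_of_le_of_finrank_le hle (by omega))
  -- the functionals φ and φ'
  obtain ⟨φ, hφv, hφW⟩ := exists_dual_of_notMem W v hvW 1
  obtain ⟨φ', hφ'v', hφ'W'⟩ := exists_dual_of_notMem W' v' hv'W' 1
  -- the generators
  have hGenW : ∀ (f : Module.Dual K V) (u : V), u ∈ W → f v = 0 → f u = 0 → tvE f u ∈ H := by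
    intro f u hu hfv hfu
    refine Subgroup.subset_closure (Or.inl ⟨tvE_det hfu, ?_, ?_⟩)
    · rw [tvE_apply hfu, hfv, zero_smul, add_zero]
    · intro w hw
      rw [tvE_apply hfu]
      exact add_mem hw (Submodule.smul_mem _ _ hu)
  have hGenW' : ∀ (f : Module.Dual K V) (u : V), u ∈ W' → f v' = 0 → f u = 0 → tvE f u ∈ H := by
    intro f u hu hfv' hfu
    refine Subgroup.subset_closure (Or.inr ⟨tvE_det hfu, ?_, ?_⟩)
    · rw [tvE_apply hfu, hfv', zero_smul, add_zero]
    · intro w hw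
      rw [tvE_apply hfu]
      exact add_mem hw (Submodule.smul_mem _ _ hu)
  -- pure transvections
  have hZW : ∀ w ∈ W, tvE φ w ∈ H :=
    tvE_phi_mem hdim hWc hW'c hφW hφv hvW hv'v hW'W hdecW hGenW hGenW'
  have hZW' : ∀ w ∈ W', tvE φ' w ∈ H :=
    tvE_phi_mem hdim hW'c hWc hφ'W' hφ'v' hv'W' hvv'span hWW' hdecW' hGenW' hGenW
  -- all transvections with direction in W (resp. W')
  have hAW : ∀ (u : V), u ∈ W → ∀ (f : Module.Dual K V), f u = 0 → tvE f u ∈ H :=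
    fun u hu f hfu => tvE_mem_of_dir_mem hφW hφv hZW hGenW hu hfu
  have hAW' : ∀ (u : V), u ∈ W' → ∀ (f : Module.Dual K V), f u = 0 → tvE f u ∈ H :=
    fun u hu f hfu => tvE_mem_of_dir_mem hφ'W' hφ'v' hZW' hGenW' hu hfu
  -- all transvections
  have hAll : ∀ (f : Module.Dual K V) (u : V), f u = 0 → tvE f u ∈ H := by
    intro f u hfu
    by_cases hu0 : u = 0
    · rw [hu0, tvE_zero_right]; exact one_mem _
    obtain ⟨g₁, hg₁H, hg₁uW⟩ : ∃ g₁ ∈ H, g₁ u ∈ W := by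
      by_cases huW : u ∈ W
      · exact ⟨1, one_mem _, by simpa using huW⟩
      obtain ⟨w, hw, c, hdecu⟩ := hdecW u
      have hc : c ≠ 0 := by
        rintro rfl; rw [zero_smul, add_zero] at hdecu; exact huW (hdecu ▸ hw)
      have hs2 : ¬ W' ≤ span K {u} := by
        intro hle
        have h1 := Submodule.finrank_mono hle
        have h2 := finrank_span_single_le (K := K) u
        omega
      obtain ⟨u', hu'W', hu'W, hu'su⟩ := exists_mem_notMem_notMem W' W (span K {u}) hW'W hs2
      obtain ⟨p', hp', q', hdecu'⟩ := hdecW u'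
      have hq' : q' ≠ 0 := by
        rintro rfl; rw [zero_smul, add_zero] at hdecu'; exact hu'W (hdecu' ▸ hp')
      have husu' : u ∉ span K {u'} := by
        intro h
        obtain ⟨b, hb⟩ := Submodule.mem_span_singleton.1 h
        have hb0 : b ≠ 0 := by rintro rfl; rw [zero_smul] at hb; exact hu0 hb.symm
        refine hu'su (Submodule.mem_span_singleton.2 ⟨b⁻¹, ?_⟩)
        rw [← hb, smul_smul, inv_mul_cancel₀ hb0, one_smul]
      obtain ⟨f', hf'u, hf'0⟩ := exists_dual_of_notMem (span K {u'}) u husu' (-(c/q'))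
      have hf'u' : f' u' = 0 := hf'0 u' (Submodule.mem_span_singleton_self u')
      refine ⟨tvE f' u', hAW' u' hu'W' f' hf'u', ?_⟩
      have e1 : tvE f' u' u = w + (-(c/q')) • p' := by
        rw [tvE_apply hf'u', hf'u, hdecu, hdecu']
        match_scalars <;> field_simp <;> ring
      rw [e1]
      exact add_mem hw (Submodule.smul_mem _ _ hp')
    have hconj := tvE_conj hfu g₁
    have hmem : tvE (f ∘ₗ (g₁.symm : V →ₗ[K] V)) (g₁ u) ∈ H := by
      refine hAW (g₁ u) hg₁uW _ ?_
      simp [hfu]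
    have hre : tvE f u = g₁⁻¹ * (g₁ * tvE f u * g₁⁻¹) * g₁ := by group
    rw [hconj] at hre
    rw [hre]
    exact mul_mem (mul_mem (inv_mem hg₁H) hmem) hg₁H
  -- conclude via the matrix factorization
  have hsub : {e : V ≃ₗ[K] V | ∃ (f : Module.Dual K V) (u : V), f u = 0 ∧ e = tvE f u}
      ⊆ (H : Set (V ≃ₗ[K] V)) := by
    rintro e ⟨f, u, hfu, rfl⟩
    exact hAll f u hfu
  exact (Subgroup.closure_le H).2 hsub (det_one_mem_closure_tvE g hg)

end Core
end Stmt6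


/-- Let `V` be a complex vector space of dimension `≥ 3`, `W ≠ W'` two
codimension-one subspaces, `v, v'` linearly independent vectors with `V = W ⊕ ℂv` and
`V = W' ⊕ ℂv'`. Then the subgroup of `GL(V)` generated by the copies of `SL(W)` and `SL(W')`
(determinant-one automorphisms fixing `v`, resp. `v'`, and stabilising `W`, resp. `W'`)
is the full special linear group `SL(V)`. -/
theorem stmt_6 (V : Type*) [AddCommGroup V] [Module ℂ V] [FiniteDimensional ℂ V]
    (hdim : 3 ≤ Module.finrank ℂ V)
    (W W' : Submodule ℂ V) (hne : W ≠ W')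
    (hWcodim : Module.finrank ℂ W = Module.finrank ℂ V - 1)
    (hW'codim : Module.finrank ℂ W' = Module.finrank ℂ V - 1)
    (v v' : V) (hli : LinearIndependent ℂ ![v, v'])
    (hW : IsCompl W (Submodule.span ℂ {v})) (hW' : IsCompl W' (Submodule.span ℂ {v'})) :
    ∀ g : V ≃ₗ[ℂ] V,
      g ∈ Subgroup.closure
        ({g : V ≃ₗ[ℂ] V | LinearMap.det g.toLinearMap = 1 ∧ g v = v ∧ ∀ w ∈ W, g w ∈ W} ∪
         {g : V ≃ₗ[ℂ] V | LinearMap.det g.toLinearMap = 1 ∧ g v' = v' ∧ ∀ w ∈ W', g w ∈ W'}) ↔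
      LinearMap.det g.toLinearMap = 1 := by
  intro g
  constructor
  · intro hg
    let D : Subgroup (V ≃ₗ[ℂ] V) :=
      { carrier := {e : V ≃ₗ[ℂ] V | LinearMap.det e.toLinearMap = 1}
        one_mem' := by
          show LinearMap.det (1 : V ≃ₗ[ℂ] V).toLinearMap = 1
          rw [show (1 : V ≃ₗ[ℂ] V).toLinearMap = LinearMap.id from rfl, LinearMap.det_id]
        mul_mem' := by
          intro a b ha hb
          show LinearMap.det (a * b).toLinearMap = 1
          rw [show (a * b).toLinearMap = a.toLinearMap * b.toLinearMap from rfl, _root_.map_mul]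
          rw [show LinearMap.det a.toLinearMap = 1 from ha,
            show LinearMap.det b.toLinearMap = 1 from hb, mul_one]
        inv_mem' := by
          intro a ha
          show LinearMap.det a⁻¹.toLinearMap = 1
          have h1 : LinearMap.det a⁻¹.toLinearMap * LinearMap.det a.toLinearMap = 1 := by
            rw [← _root_.map_mul, show a⁻¹.toLinearMap * a.toLinearMap = (a⁻¹ * a).toLinearMap from rfl,
              inv_mul_cancel a, show (1 : V ≃ₗ[ℂ] V).toLinearMap = LinearMap.id from rfl,
              LinearMap.det_id]
          rw [show LinearMap.det a.toLinearMap = 1 from ha, mul_one] at h1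
          exact h1 }
    exact (Subgroup.closure_le D).2
      (by rintro e (⟨h, -, -⟩ | ⟨h, -, -⟩) <;> exact h) hg
  · exact fun hg => Stmt6.hard hdim W W' hne hWcodim hW'codim v v' hli hW hW' g hg
end

section
/- Let K be a field, n ≥ 1, and x_1, …, x_{n+1} ∈ K with x_i ≠ 0 and x_i ≠ 1 for all i. Then the determinant of the n×n matrix h(x_1, …, x_{n+1}) equals (1 − x_1 x_2 ⋯ x_{n+1}) / ((1 − x_1)(1 − x_2)⋯(1 − x_{n+1})). In particular, h(x_1, …, x_{n+1}) is invertible if and only if x_1 x_2 ⋯ x_{n+1} ≠ 1. -/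
/-- The `n × n` matrix of the skew-hermitian form preserved by the reduced Gassner
representation of the pure braid group, specialised at `X_i ↦ x i` (indices `0`-based):
`h j j = (1 - x_j x_{j+1}) / ((1 - x_j)(1 - x_{j+1}))`, `h j (j+1) = -1 / (1 - x_{j+1})`,
`h (j+1) j = -x_{j+1} / (1 - x_{j+1})` and `h j k = 0` for `|j - k| ≥ 2`. -/
def gassnerForm {K : Type*} [Field K] {n : ℕ} (x : Fin (n + 1) → K) :
    Matrix (Fin n) (Fin n) K := fun j k =>
  if (j : ℕ) = (k : ℕ) then
    (1 - x j.castSucc * x j.succ) / ((1 - x j.castSucc) * (1 - x j.succ))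
  else if (j : ℕ) + 1 = (k : ℕ) then -1 / (1 - x k.castSucc)
  else if (k : ℕ) + 1 = (j : ℕ) then -(x j.castSucc) / (1 - x j.castSucc)
  else 0

lemma gassner_sub {K : Type*} [Field K] {n : ℕ} (x : Fin (n + 2) → K) :
    (gassnerForm x).submatrix Fin.castSucc Fin.castSucc = gassnerForm (x ∘ Fin.castSucc) := by
  ext j k
  simp [gassnerForm, Matrix.submatrix, Function.comp, Fin.succ_castSucc, -Fin.castSucc_succ]

lemma gassner_det {K : Type*} [Field K] :
    ∀ (n : ℕ) (x : Fin (n + 1) → K), (∀ i, x i ≠ 1) →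
      (gassnerForm x).det = (1 - ∏ i, x i) / ∏ i, (1 - x i) := by
  intro n
  induction n using Nat.twoStepInduction with
  | zero =>
    intro x h1
    have : (1 : K) - x 0 ≠ 0 := sub_ne_zero.2 fun h => h1 0 h.symm
    simp [Matrix.det_fin_zero, Fin.prod_univ_one, div_self this]
  | one =>
    intro x h1
    rw [Matrix.det_fin_one]
    simp [gassnerForm, Fin.prod_univ_two]
  | more n ih ih1 =>
    intro x h1
    set A := gassnerForm x with hA
    rw [Matrix.det_succ_row A (Fin.last (n+1))]
    rw [Fin.sum_univ_castSucc, Fin.sum_univ_castSucc]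
    have hz : ∀ j : Fin n,
        (-1 : K) ^ ((Fin.last (n+1) : ℕ) + ((j.castSucc.castSucc : Fin (n+2)) : ℕ)) *
          A (Fin.last (n+1)) j.castSucc.castSucc *
          (A.submatrix (Fin.last (n+1)).succAbove (j.castSucc.castSucc).succAbove).det = 0 := by
      intro j
      have hj := j.isLt
      have : A (Fin.last (n+1)) j.castSucc.castSucc = 0 := by
        simp only [hA, gassnerForm, Fin.coe_castSucc, Fin.val_last]
        rw [if_neg (by omega), if_neg (by omega), if_neg (by omega)]
      rw [this]; ring
    rw [Finset.sum_congr rfl fun j _ => hz j, Finset.sum_const_zero]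
    -- notation
    set u := x (Fin.last (n+1)).castSucc with hu
    set v := x (Fin.last (n+2)) with hv
    have hcol : ∀ j : Fin n, Fin.castSucc (Fin.last n) ≠ j.castSucc.castSucc := by
      intro j h; have := j.isLt; have := congrArg Fin.val h; simp at this; omega
    -- minor at column `last (n+1)` (the leading principal minor)
    have hminor3 : (A.submatrix (Fin.last (n+1)).succAbove (Fin.last (n+1)).succAbove).det
        = (1 - ∏ i : Fin (n+2), x i.castSucc) / ∏ i : Fin (n+2), (1 - x i.castSucc) := by
      rw [Fin.succAbove_last, hA, gassner_sub]
      exact ih1 (x ∘ Fin.castSucc) fun i => h1 _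
    -- minor at column `(last n).castSucc`
    have hcolmap : ((Fin.last n).castSucc).succAbove ∘ Fin.castSucc
        = (Fin.castSucc ∘ Fin.castSucc : Fin n → Fin (n+2)) := by
      funext i
      exact Fin.succAbove_castSucc_of_lt (Fin.last n) i.castSucc (Fin.castSucc_lt_last i)
    have hminor2 : (A.submatrix (Fin.last (n+1)).succAbove
          ((Fin.last n).castSucc).succAbove).det
        = (-1 / (1 - u)) * ((1 - ∏ i : Fin (n+1), x i.castSucc.castSucc)
            / ∏ i : Fin (n+1), (1 - x i.castSucc.castSucc)) := by
      rw [Fin.succAbove_last]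
      rw [Matrix.det_succ_column _ (Fin.last n)]
      rw [Fin.sum_univ_castSucc]
      have hz2 : ∀ i : Fin n,
          (-1 : K) ^ (((i.castSucc : Fin (n+1)) : ℕ) + (Fin.last n : ℕ)) *
            (A.submatrix Fin.castSucc ((Fin.last n).castSucc).succAbove) i.castSucc (Fin.last n) *
            ((A.submatrix Fin.castSucc ((Fin.last n).castSucc).succAbove).submatrix
              i.castSucc.succAbove (Fin.last n).succAbove).det = 0 := by
        intro i
        have hi := i.isLt
        have : (A.submatrix Fin.castSucc ((Fin.last n).castSucc).succAbove) i.castSucc (Fin.last n) = 0 := by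
          simp only [Matrix.submatrix_apply, Fin.succAbove_castSucc_self, hA, gassnerForm,
            Fin.coe_castSucc, Fin.val_succ, Fin.val_last]
          rw [if_neg (by omega), if_neg (by omega), if_neg (by omega)]
        rw [this]; ring
      rw [Finset.sum_congr rfl fun i _ => hz2 i, Finset.sum_const_zero, zero_add]
      have e1 : (A.submatrix Fin.castSucc ((Fin.last n).castSucc).succAbove)
          (Fin.last n) (Fin.last n) = -1 / (1 - u) := by
        simp only [Matrix.submatrix_apply, Fin.succAbove_castSucc_self, Fin.succ_last, hA,
          gassnerForm, Fin.coe_castSucc, Fin.val_last]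
        simp [hu]
      have e2 : ((A.submatrix Fin.castSucc ((Fin.last n).castSucc).succAbove).submatrix
            (Fin.last n).succAbove (Fin.last n).succAbove).det
          = (1 - ∏ i : Fin (n+1), x i.castSucc.castSucc)
              / ∏ i : Fin (n+1), (1 - x i.castSucc.castSucc) := by
        rw [Matrix.submatrix_submatrix, Fin.succAbove_last, hcolmap]
        have : A.submatrix (Fin.castSucc ∘ Fin.castSucc) (Fin.castSucc ∘ Fin.castSucc)
            = gassnerForm ((x ∘ Fin.castSucc) ∘ Fin.castSucc) := by
          rw [← Matrix.submatrix_submatrix, hA, gassner_sub, gassner_sub]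
        rw [this, ih ((x ∘ Fin.castSucc) ∘ Fin.castSucc) fun i => h1 _]
        rfl
      rw [e1, e2]
      have : ((-1 : K)) ^ ((Fin.last n : ℕ) + (Fin.last n : ℕ)) = 1 :=
        Even.neg_one_pow ⟨n, by simp⟩
      rw [this]; ring
    have eA21 : A (Fin.last (n+1)) ((Fin.last n).castSucc) = -u / (1 - u) := by
      simp only [hA, gassnerForm, Fin.coe_castSucc, Fin.val_last]
      norm_num
      rw [if_neg (by omega)]
    have eA22 : A (Fin.last (n+1)) (Fin.last (n+1)) = (1 - u * v) / ((1 - u) * (1 - v)) := by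
      simp only [hA, gassnerForm, Fin.val_last, Fin.succ_last, ← hu, ← hv]
      norm_num
    have sgn1 : ((-1 : K)) ^ ((Fin.last (n+1) : ℕ) + ((Fin.last n).castSucc : ℕ)) = -1 := by
      simp only [Fin.val_last, Fin.coe_castSucc]
      exact Odd.neg_one_pow ⟨n, by ring⟩
    have sgn2 : ((-1 : K)) ^ ((Fin.last (n+1) : ℕ) + (Fin.last (n+1) : ℕ)) = 1 := by
      simp only [Fin.val_last]
      exact Even.neg_one_pow ⟨n + 1, by ring⟩
    rw [eA21, eA22, sgn1, sgn2, hminor2, hminor3]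
    rw [show ∏ i : Fin (n+3), x i
        = ((∏ i : Fin (n+1), x i.castSucc.castSucc) * u) * v by
      rw [Fin.prod_univ_castSucc (f := x), Fin.prod_univ_castSucc (f := fun i => x i.castSucc)]]
    rw [show ∏ i : Fin (n+3), (1 - x i)
        = ((∏ i : Fin (n+1), (1 - x i.castSucc.castSucc)) * (1 - u)) * (1 - v) by
      rw [Fin.prod_univ_castSucc (f := fun i => 1 - x i),
        Fin.prod_univ_castSucc (f := fun i : Fin (n+2) => 1 - x i.castSucc)]]
    rw [show ∏ i : Fin (n+2), x i.castSucc
        = (∏ i : Fin (n+1), x i.castSucc.castSucc) * u by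
      rw [Fin.prod_univ_castSucc (f := fun i => x i.castSucc)]]
    rw [show ∏ i : Fin (n+2), (1 - x i.castSucc)
        = (∏ i : Fin (n+1), (1 - x i.castSucc.castSucc)) * (1 - u) by
      rw [Fin.prod_univ_castSucc (f := fun i : Fin (n+2) => 1 - x i.castSucc)]]
    set a := ∏ i : Fin (n+1), x i.castSucc.castSucc
    set b := ∏ i : Fin (n+1), (1 - x i.castSucc.castSucc) with hb
    have hbne : b ≠ 0 := by
      rw [hb]
      exact Finset.prod_ne_zero_iff.2 fun i _ => sub_ne_zero.2 fun h => h1 _ h.symm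
    have hune : (1 : K) - u ≠ 0 := sub_ne_zero.2 fun h => h1 _ h.symm
    have hvne : (1 : K) - v ≠ 0 := sub_ne_zero.2 fun h => h1 _ h.symm
    field_simp
    ring

/-- The determinant of the Gassner form matrix is
`(1 - x₁ ⋯ x_{n+1}) / ((1 - x₁) ⋯ (1 - x_{n+1}))`; in particular the matrix is invertible
if and only if `x₁ x₂ ⋯ x_{n+1} ≠ 1`. -/
theorem stmt_10 (K : Type*) [Field K] (n : ℕ) (hn : 1 ≤ n)
    (x : Fin (n + 1) → K) (h0 : ∀ i, x i ≠ 0) (h1 : ∀ i, x i ≠ 1) :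
    (gassnerForm x).det = (1 - ∏ i, x i) / ∏ i, (1 - x i) ∧
    (IsUnit (gassnerForm x) ↔ ∏ i, x i ≠ 1) := by
  have hdet := gassner_det n x h1
  have hq : ∏ i, (1 - x i) ≠ 0 :=
    Finset.prod_ne_zero_iff.2 fun i _ => sub_ne_zero.2 fun h => h1 i h.symm
  refine ⟨hdet, ?_⟩
  rw [Matrix.isUnit_iff_isUnit_det, isUnit_iff_ne_zero, hdet]
  constructor
  · intro h hp
    exact h (by rw [hp, sub_self, zero_div])
  · intro hp
    exact div_ne_zero (sub_ne_zero.2 fun h => hp h.symm) hq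
end

section
/- Let K be a field, n ≥ 1, x_1, …, x_{n+1} ∈ K with x_i ≠ 0 and x_i ≠ 1 for all i, and let σ be a field automorphism of K with σ(x_i) = x_i^{−1} for all i. Then the matrix h = h(x_1, …, x_{n+1}) is skew-hermitian with respect to σ: σ(h_{jk}) = −h_{kj} for all 1 ≤ j, k ≤ n, i.e., applying σ entrywise to the transpose of h yields −h. -/
/-- If `σ` is a field automorphism of `K` with `σ (x i) = (x i)⁻¹` for all
`i`, then the Gassner form matrix is skew-hermitian with respect to `σ`:
`σ (h j k) = -h k j` for all `j, k`. -/
theorem stmt_11 (K : Type*) [Field K] (n : ℕ) (hn : 1 ≤ n)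
    (x : Fin (n + 1) → K) (h0 : ∀ i, x i ≠ 0) (h1 : ∀ i, x i ≠ 1)
    (σ : K ≃+* K) (hσx : ∀ i, σ (x i) = (x i)⁻¹) :
    ∀ j k : Fin n, σ (gassnerForm x j k) = -gassnerForm x k j := by
  have hs : ∀ i, (1 : K) - x i ≠ 0 := fun i => sub_ne_zero.mpr (Ne.symm (h1 i))
  intro j k
  by_cases hjk : (j : ℕ) = (k : ℕ)
  · have : j = k := Fin.ext hjk
    subst this
    simp only [gassnerForm, if_pos rfl, eq_self_iff_true, if_true]
    rw [map_div₀, map_mul, map_sub, map_sub, map_sub, map_one, map_mul, hσx, hσx]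
    have ha := h0 j.castSucc; have hb := h0 j.succ
    have has := hs j.castSucc; have hbs := hs j.succ
    have hd : (1 - x j.castSucc + (x j.castSucc * x j.succ - x j.succ)) ≠ 0 := by
      intro h; exact mul_ne_zero has hbs (by linear_combination h)
    field_simp
    linear_combination (x j.castSucc * x j.succ - 1) * mul_inv_cancel₀ hd
  · by_cases hjk1 : (j : ℕ) + 1 = (k : ℕ)
    · have hkj1 : ¬ ((k : ℕ) + 1 = (j : ℕ)) := by omega
      have hkj : ¬ ((k : ℕ) = (j : ℕ)) := by omega
      simp only [gassnerForm, if_neg hjk, if_pos hjk1, if_neg hkj, if_neg hkj1]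
      rw [map_div₀, map_sub, map_one, map_neg, map_one, hσx]
      have hb := h0 k.castSucc; have hbs := hs k.castSucc
      have hbs' : (-1 : K) + x k.castSucc ≠ 0 := fun h => hbs (by linear_combination -h)
      field_simp
      linear_combination mul_inv_cancel₀ hbs'
    · by_cases hkj1 : (k : ℕ) + 1 = (j : ℕ)
      · have hkj : ¬ ((k : ℕ) = (j : ℕ)) := by omega
        simp only [gassnerForm, if_neg hjk, if_neg hjk1, if_pos hkj1, if_neg hkj]
        rw [map_div₀, map_sub, map_one, map_neg, hσx]
        have hb := h0 j.castSucc; have hbs := hs j.castSucc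
        have hbs' : (-1 : K) + x j.castSucc ≠ 0 := fun h => hbs (by linear_combination -h)
        field_simp
        linear_combination mul_inv_cancel₀ hbs'
      · have hkj : ¬ ((k : ℕ) = (j : ℕ)) := by omega
        have hkj1' : ¬ ((j : ℕ) = (k : ℕ)) := hjk
        simp only [gassnerForm, if_neg hjk, if_neg hjk1, if_neg hkj1, if_neg hkj]
        simp
end

section
/- Let K be a field, n ≥ 1, x_1, …, x_{n+1} ∈ K with x_i ≠ 0 and x_i ≠ 1 for all i, and let σ be a field automorphism of K with σ(x_i) = x_i^{−1} for all i. Let T_1, …, T_n be the specialized reduced Gassner matrices and h = h(x_1, …, x_{n+1}). Then each T_i preserves the sesquilinear form defined by h: writing h(v, w) = Σ_{j,k} σ(v_j) h_{jk} w_k for v, w ∈ K^n, one has h(T_i v, T_i w) = h(v, w) for all v, w ∈ K^n and all 1 ≤ i ≤ n; equivalently, as a matrix identity, (σ applied entrywise to the transpose of T_i) · h · T_i = h. -/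
/-- `T` is the family of specialized reduced Gassner matrices for the parameters `x`:
on the standard basis (`0`-based indices), `T i ε_{i-1} = ε_{i-1} + x_i (1 - x_{i+1}) ε_i`,
`T i ε_i = x_i x_{i+1} ε_i`, `T i ε_{i+1} = (1 - x_i) ε_i + ε_{i+1}`, and `T i ε_j = ε_j`
for `|i - j| ≥ 2`. -/
def IsGassnerMatrices {K : Type*} [Field K] {n : ℕ} (x : Fin (n + 1) → K)
    (T : Fin n → Matrix (Fin n) (Fin n) K) : Prop :=
  ∀ i k : Fin n,
    (T i).mulVec (Pi.single k 1) =
      if k = i then (x i.castSucc * x i.succ) • (Pi.single i 1 : Fin n → K)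
      else if (k : ℕ) + 1 = (i : ℕ) then
        (Pi.single k 1 : Fin n → K) + (x i.castSucc * (1 - x i.succ)) • (Pi.single i 1 : Fin n → K)
      else if (k : ℕ) = (i : ℕ) + 1 then
        (1 - x i.castSucc) • (Pi.single i 1 : Fin n → K) + (Pi.single k 1 : Fin n → K)
      else (Pi.single k 1 : Fin n → K)

/-- If `σ` is a field automorphism of `K` with `σ (x i) = (x i)⁻¹`, then
the specialized reduced Gassner matrices preserve the sesquilinear form attached to the
Gassner form matrix `h`: `h (T i v) (T i w) = h (v) (w)` for all `v, w`; equivalently, as a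
matrix identity, `(σ ∘ Tᵢᵀ) ⬝ h ⬝ Tᵢ = h`. -/
theorem stmt_12 (K : Type*) [Field K] (n : ℕ) (hn : 1 ≤ n)
    (x : Fin (n + 1) → K) (h0 : ∀ i, x i ≠ 0) (h1 : ∀ i, x i ≠ 1)
    (σ : K ≃+* K) (hσx : ∀ i, σ (x i) = (x i)⁻¹)
    (T : Fin n → Matrix (Fin n) (Fin n) K) (hT : IsGassnerMatrices x T) :
    (∀ i : Fin n, ∀ v w : Fin n → K,
      (∑ j, ∑ k, σ (((T i).mulVec v) j) * gassnerForm x j k * ((T i).mulVec w) k) =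
        ∑ j, ∑ k, σ (v j) * gassnerForm x j k * w k) ∧
    (∀ i : Fin n, ((T i).transpose.map ⇑σ) * gassnerForm x * T i = gassnerForm x) := by
  have key : ∀ i : Fin n, ((T i).transpose.map ⇑σ) * gassnerForm x * T i = gassnerForm x := by
    intro i
    set a := x i.castSucc with ha_def
    set b := x i.succ with hb_def
    have ha0 : a ≠ 0 := h0 _
    have hb0 : b ≠ 0 := h0 _
    have ha1 : (1:K) - a ≠ 0 := sub_ne_zero.mpr (Ne.symm (h1 _))
    have hb1 : (1:K) - b ≠ 0 := sub_ne_zero.mpr (Ne.symm (h1 _))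
    have hσa : σ a = a⁻¹ := hσx _
    have hσb : σ b = b⁻¹ := hσx _
    set r : Fin n → K := fun k =>
      if k = i then a * b - 1
      else if (k:ℕ)+1 = (i:ℕ) then a * (1 - b)
      else if (k:ℕ) = (i:ℕ)+1 then 1 - a else 0 with hr_def
    -- entries of T i
    have hTE : ∀ j k : Fin n, T i j k =
        (if j = k then 1 else 0) + (if j = i then r k else 0) := by
      intro j k
      have hcol := congrFun (hT i k) j
      simp only [Matrix.mulVec, dotProduct, Pi.single_apply, mul_ite, mul_one, mul_zero,
        Finset.sum_ite_eq', Finset.mem_univ, if_true] at hcol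
      rw [hcol]; simp only [hr_def]
      by_cases hki : k = i
      · subst hki
        simp only [if_pos rfl, Pi.smul_apply, Pi.single_apply, smul_eq_mul]
        by_cases hjk : j = k <;> simp [hjk] <;> ring
      · have hki' : ¬ ((k:ℕ) = (i:ℕ)) := by simpa [Fin.ext_iff] using hki
        rw [if_neg hki]
        by_cases h2 : (k:ℕ)+1 = (i:ℕ)
        · rw [if_pos h2]
          simp only [Pi.add_apply, Pi.smul_apply, Pi.single_apply, smul_eq_mul]
          by_cases hjk : j = k <;> by_cases hji : j = i <;> simp_all [Fin.ext_iff]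
        · rw [if_neg h2]
          by_cases h3 : (k:ℕ) = (i:ℕ)+1
          · rw [if_pos h3]
            simp only [Pi.add_apply, Pi.smul_apply, Pi.single_apply, smul_eq_mul]
            by_cases hjk : j = k <;> by_cases hji : j = i <;> simp_all [Fin.ext_iff]
          · rw [if_neg h3]
            simp only [Pi.single_apply]
            by_cases hjk : j = k <;> by_cases hji : j = i <;>
              simp_all [Fin.ext_iff, hki', h2, h3]
    -- evaluations of the form matrix
    have hgii : gassnerForm x i i = (1 - a*b)/((1-a)*(1-b)) := by
      simp [gassnerForm]; rfl
    have hgl1 : ∀ l : Fin n, (l:ℕ)+1 = (i:ℕ) → gassnerForm x l i = -1/(1-a) := by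
      intro l hl
      simp only [gassnerForm]
      rw [if_neg (by omega), if_pos hl]
    have hgl2 : ∀ l : Fin n, (l:ℕ) = (i:ℕ)+1 → gassnerForm x l i = -b/(1-b) := by
      intro l hl
      have hc : l.castSucc = i.succ := by simp [Fin.ext_iff, hl]
      simp only [gassnerForm]
      rw [if_neg (by omega), if_neg (by omega), if_pos (by omega), hc]
    have hgl0 : ∀ l : Fin n, l ≠ i → ¬((l:ℕ)+1 = (i:ℕ)) → ¬((l:ℕ) = (i:ℕ)+1) →
        gassnerForm x l i = 0 := by
      intro l hl hl1 hl2
      have hl' : ¬((l:ℕ) = (i:ℕ)) := by simpa [Fin.ext_iff] using hl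
      simp only [gassnerForm]
      rw [if_neg hl', if_neg (by omega), if_neg (by omega)]
    have hgm1 : ∀ m : Fin n, (m:ℕ)+1 = (i:ℕ) → gassnerForm x i m = -a/(1-a) := by
      intro m hm
      simp only [gassnerForm]
      rw [if_neg (by omega), if_neg (by omega), if_pos hm]
    have hgm2 : ∀ m : Fin n, (m:ℕ) = (i:ℕ)+1 → gassnerForm x i m = -1/(1-b) := by
      intro m hm
      have hc : m.castSucc = i.succ := by simp [Fin.ext_iff, hm]
      simp only [gassnerForm]
      rw [if_neg (by omega), if_pos (by omega), hc]
    have hgm0 : ∀ m : Fin n, m ≠ i → ¬((m:ℕ)+1 = (i:ℕ)) → ¬((m:ℕ) = (i:ℕ)+1) →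
        gassnerForm x i m = 0 := by
      intro m hm hm1 hm2
      have hm' : ¬((i:ℕ) = (m:ℕ)) := by
        intro h; exact hm (Fin.ext h.symm)
      simp only [gassnerForm]
      rw [if_neg hm', if_neg (by omega), if_neg (by omega)]
    -- structural lemmas
    have L1 : ∀ l : Fin n, σ (r l) = ((1-a)*(1-b)/(a*b)) * gassnerForm x l i := by
      intro l
      simp only [hr_def]
      by_cases hl : l = i
      · subst hl
        rw [if_pos rfl, hgii, map_sub, map_mul, map_one, hσa, hσb]
        field_simp
      · rw [if_neg hl]
        by_cases hl1 : (l:ℕ)+1 = (i:ℕ)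
        · rw [if_pos hl1, hgl1 l hl1, map_mul, map_sub, map_one, hσa, hσb]
          field_simp
          ring
        · rw [if_neg hl1]
          by_cases hl2 : (l:ℕ) = (i:ℕ)+1
          · rw [if_pos hl2, hgl2 l hl2, map_sub, map_one, hσa]
            field_simp
            ring
          · rw [if_neg hl2, hgl0 l hl hl1 hl2, map_zero, mul_zero]
    have L2 : ∀ m : Fin n, r m = (-((1-a)*(1-b))) * gassnerForm x i m := by
      intro m
      simp only [hr_def]
      by_cases hm : m = i
      · subst hm
        rw [if_pos rfl, hgii]
        field_simp
        ring
      · rw [if_neg hm]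
        by_cases hm1 : (m:ℕ)+1 = (i:ℕ)
        · rw [if_pos hm1, hgm1 m hm1]
          field_simp
        · rw [if_neg hm1]
          by_cases hm2 : (m:ℕ) = (i:ℕ)+1
          · rw [if_pos hm2, hgm2 m hm2]
            field_simp
          · rw [if_neg hm2, hgm0 m hm hm1 hm2, mul_zero]
    -- the key scalar identity
    have C : ∀ l m : Fin n,
        σ (r l) * gassnerForm x i m + gassnerForm x l i * r m
          + σ (r l) * gassnerForm x i i * r m = 0 := by
      intro l m
      rw [L1 l, L2 m, hgii]
      field_simp
      ring
    -- assemble the matrix identity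
    ext l m
    simp only [Matrix.mul_apply, Matrix.map_apply, Matrix.transpose_apply, hTE]
    have expand : ∀ j : Fin n,
        σ ((if j = l then (1:K) else 0) + (if j = i then r l else 0)) =
          (if j = l then (1:K) else 0) + (if j = i then σ (r l) else 0) := by
      intro j
      rw [map_add, apply_ite σ, apply_ite σ, map_one, map_zero]
    simp only [expand, add_mul, mul_add, Finset.sum_add_distrib, ite_mul, mul_ite,
      zero_mul, mul_zero, one_mul, mul_one, Finset.sum_ite_eq, Finset.sum_ite_eq',
      Finset.mem_univ, if_true]
    linear_combination C l m
  refine ⟨?_, key⟩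
  intro i v w
  -- reduce the sesquilinear statement to the matrix identity
  have hmv : (fun j => σ ((T i).mulVec v j)) = ((T i).map ⇑σ).mulVec (fun l => σ (v l)) := by
    funext j
    simp [Matrix.mulVec, dotProduct, map_sum, map_mul, Matrix.map_apply]
  have form : ∀ (B : Matrix (Fin n) (Fin n) K) (f u : Fin n → K),
      (∑ j, ∑ k, f j * B j k * u k) = dotProduct f (B.mulVec u) := by
    intro B f u
    simp [dotProduct, Matrix.mulVec, Finset.mul_sum, mul_assoc]
  have hdp : ∀ (A : Matrix (Fin n) (Fin n) K) (u z : Fin n → K),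
      dotProduct (A.mulVec u) z = dotProduct u (A.transpose.mulVec z) := by
    intro A u z
    simp only [dotProduct, Matrix.mulVec, Matrix.transpose_apply,
      Finset.sum_mul, Finset.mul_sum]
    rw [Finset.sum_comm]
    apply Finset.sum_congr rfl
    intro j _
    apply Finset.sum_congr rfl
    intro k _
    ring
  calc (∑ j, ∑ k, σ (((T i).mulVec v) j) * gassnerForm x j k * ((T i).mulVec w) k)
      = dotProduct (fun j => σ ((T i).mulVec v j))
          ((gassnerForm x).mulVec ((T i).mulVec w)) := form _ _ _
    _ = dotProduct (((T i).map ⇑σ).mulVec (fun l => σ (v l)))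
          ((gassnerForm x * T i).mulVec w) := by rw [hmv, Matrix.mulVec_mulVec]
    _ = dotProduct (fun l => σ (v l))
          ((((T i).map ⇑σ).transpose * (gassnerForm x * T i)).mulVec w) := by
        rw [hdp, Matrix.mulVec_mulVec]
    _ = dotProduct (fun l => σ (v l)) ((gassnerForm x).mulVec w) := by
        rw [← Matrix.transpose_map, ← mul_assoc, key i]
    _ = ∑ j, ∑ k, σ (v j) * gassnerForm x j k * w k := (form _ _ _).symm
end

section
/- Let K be a field, n ≥ 2, and x_1, …, x_{n+1} ∈ K with x_i ≠ 0 and x_i ≠ 1 for all i, and let T_1, …, T_n be the specialized reduced Gassner matrices acting on K^n. Then the action of the group generated by T_1, …, T_n on K^n is irreducible (i.e., the only K-subspaces of K^n invariant under every T_i are 0 and K^n) if and only if x_1 x_2 ⋯ x_{n+1} ≠ 1. -/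
namespace Stmt13Aux

variable {K : Type*} [Field K] {n : ℕ}

/-- `x` extended to all of `ℕ` by `1`. -/
def xe (n : ℕ) (x : Fin (n+1) → K) (j : ℕ) : K := if h : j < n+1 then x ⟨j, h⟩ else 1

/-- a vector extended to all of `ℕ` by `0`. -/
def ve (n : ℕ) (v : Fin n → K) (m : ℕ) : K := if h : m < n then v ⟨m, h⟩ else 0

/-- partial products. -/
def pp (n : ℕ) (x : Fin (n+1) → K) (m : ℕ) : K := ∏ j ∈ Finset.range m, xe n x j

/-- the coefficient functional of row `m`. -/
def cc (n : ℕ) (x : Fin (n+1) → K) (v : Fin n → K) (m : ℕ) : K :=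
  (xe n x m * xe n x (m+1) - 1) * ve n v m + (1 - xe n x m) * ve n v (m+1)
  + (if 0 < m then xe n x m * (1 - xe n x (m+1)) * ve n v (m-1) else 0)

lemma xe_lt (x : Fin (n+1) → K) {j : ℕ} (h : j < n+1) : xe n x j = x ⟨j, h⟩ := dif_pos h

lemma ve_of_lt (v : Fin n → K) {m : ℕ} (h : m < n) : ve n v m = v ⟨m, h⟩ := dif_pos h

lemma ve_of_ge (v : Fin n → K) {m : ℕ} (h : n ≤ m) : ve n v m = 0 := dif_neg (by omega)

lemma ve_coe (v : Fin n → K) (k : Fin n) : ve n v ↑k = v k := by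
  rw [ve_of_lt v k.isLt]

lemma pp_succ (x : Fin (n+1) → K) (m : ℕ) : pp n x (m+1) = pp n x m * xe n x m :=
  Finset.prod_range_succ _ _

lemma pp_zero (x : Fin (n+1) → K) : pp n x 0 = 1 := Finset.prod_range_zero _

lemma pp_one (x : Fin (n+1) → K) : pp n x 1 = xe n x 0 := Finset.prod_range_one _

theorem mulVec_eq {x : Fin (n+1) → K} {T : Fin n → Matrix (Fin n) (Fin n) K}
    (hT : IsGassnerMatrices x T) (i : Fin n) (v : Fin n → K) :
    (T i).mulVec v = v + Pi.single i (cc n x v ↑i) := by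
  have hxc : x i.castSucc = xe n x ↑i := (xe_lt x (Nat.lt_succ_of_lt i.isLt)).symm
  have hxs : x i.succ = xe n x (↑i+1) := (xe_lt x (Nat.succ_lt_succ i.isLt)).symm
  have hE : ∀ j k : Fin n, T i j k =
      (if j = k then (1:K) else 0) +
      (if j = i then
        (if k = i then xe n x ↑i * xe n x (↑i+1) - 1
         else if (k:ℕ)+1 = (i:ℕ) then xe n x ↑i * (1 - xe n x (↑i+1))
         else if (k:ℕ) = (i:ℕ)+1 then 1 - xe n x ↑i else 0) else 0) := by
    intro j k
    have h := congrFun ((Matrix.mulVec_single (T i) k 1).symm.trans (hT i k)) j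
    rw [MulOpposite.op_one, one_smul, Matrix.col_apply] at h
    rw [h, hxc, hxs]
    simp only [apply_ite (fun f : Fin n → K => f j), Pi.add_apply, Pi.smul_apply,
      Pi.single_apply, smul_eq_mul, Fin.ext_iff]
    split_ifs <;> first | ring1 | omega
  funext j
  have hmv : (T i).mulVec v j = ∑ k, T i j k * v k := rfl
  by_cases hj : j = i
  · subst hj
    rw [hmv]
    simp only [hE, eq_self_iff_true, if_true, add_mul, ite_mul, one_mul, zero_mul]
    rw [Finset.sum_add_distrib]
    have hsum1 : ∑ k : Fin n, (if j = k then v k else 0) = v j := by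
      rw [Finset.sum_ite_eq]; simp
    have hdec : ∀ k : Fin n,
        (if k = j then (xe n x ↑j * xe n x (↑j+1) - 1) * v k
         else if (k:ℕ)+1 = (j:ℕ) then xe n x ↑j * (1 - xe n x (↑j+1)) * v k
         else if (k:ℕ) = (j:ℕ)+1 then (1 - xe n x ↑j) * v k else 0) =
        (if k = j then (xe n x ↑j * xe n x (↑j+1) - 1) * v k else 0) +
        (if (k:ℕ)+1 = (j:ℕ) then xe n x ↑j * (1 - xe n x (↑j+1)) * v k else 0) +
        (if (k:ℕ) = (j:ℕ)+1 then (1 - xe n x ↑j) * v k else 0) := by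
      intro k
      simp only [Fin.ext_iff]
      split_ifs <;> first | ring1 | omega
    rw [Finset.sum_congr rfl (fun k _ => hdec k), Finset.sum_add_distrib,
      Finset.sum_add_distrib]
    have c1 : ∑ k : Fin n, (if k = j then (xe n x ↑j * xe n x (↑j+1) - 1) * v k else 0)
        = (xe n x ↑j * xe n x (↑j+1) - 1) * ve n v ↑j := by
      rw [Finset.sum_ite_eq']
      simp [ve_coe]
    have c2 : ∑ k : Fin n, (if (k:ℕ)+1 = (j:ℕ) then xe n x ↑j * (1 - xe n x (↑j+1)) * v k else 0)
        = (if 0 < (j:ℕ) then xe n x ↑j * (1 - xe n x (↑j+1)) * ve n v (↑j-1) else 0) := by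
      by_cases hjp : 0 < (j:ℕ)
      · rw [if_pos hjp, Finset.sum_eq_single (⟨↑j-1, by omega⟩ : Fin n)]
        · rw [if_pos (by simp; omega), ve_of_lt v (by omega : (j:ℕ)-1 < n)]
        · intro k _ hk
          rw [if_neg]
          intro hc
          exact hk (Fin.ext (by simp; omega))
        · intro h; exact absurd (Finset.mem_univ _) h
      · rw [if_neg hjp]
        apply Finset.sum_eq_zero
        intro k _
        rw [if_neg (by omega)]
    have c3 : ∑ k : Fin n, (if (k:ℕ) = (j:ℕ)+1 then (1 - xe n x ↑j) * v k else 0)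
        = (1 - xe n x ↑j) * ve n v (↑j+1) := by
      by_cases hjn : (j:ℕ)+1 < n
      · rw [Finset.sum_eq_single (⟨↑j+1, hjn⟩ : Fin n)]
        · rw [if_pos (by simp), ve_of_lt v hjn]
        · intro k _ hk
          rw [if_neg]
          intro hc
          exact hk (Fin.ext (by simp; omega))
        · intro h; exact absurd (Finset.mem_univ _) h
      · rw [ve_of_ge v (by omega), mul_zero]
        apply Finset.sum_eq_zero
        intro k _
        rw [if_neg (by have := k.isLt; omega)]
    rw [hsum1, c1, c2, c3, Pi.add_apply, Pi.single_eq_same, cc, ve_coe]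
    ring
  · rw [hmv]
    simp only [hE, if_neg hj, add_zero, ite_mul, one_mul, zero_mul]
    rw [Finset.sum_ite_eq]
    simp [Pi.single_eq_of_ne hj]


lemma xe_ne_zero (x : Fin (n+1) → K) (h0 : ∀ i, x i ≠ 0) (j : ℕ) : xe n x j ≠ 0 := by
  unfold xe; split
  · exact h0 _
  · exact one_ne_zero

lemma xe_ne_one (x : Fin (n+1) → K) (h1 : ∀ i, x i ≠ 1) {j : ℕ} (h : j < n+1) :
    xe n x j ≠ 1 := by
  rw [xe_lt x h]; exact h1 _

lemma ve_single (k : Fin n) (m : ℕ) :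
    ve n (Pi.single k (1:K)) m = if m = ↑k then (1:K) else 0 := by
  rcases lt_or_ge m n with h | h
  · rw [ve_of_lt _ h, Pi.single_apply]
    simp [Fin.ext_iff]
  · rw [ve_of_ge _ h, if_neg (by have := k.isLt; omega)]

lemma cc_single_up (x : Fin (n+1) → K) (k : Fin n) (h : (k:ℕ)+1 < n) :
    cc n x (Pi.single k (1:K)) (↑k+1) = xe n x (↑k+1) * (1 - xe n x (↑k+1+1)) := by
  unfold cc
  simp only [ve_single]
  rw [if_neg (by omega), if_neg (by omega), if_pos (by omega), if_pos (by omega)]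
  ring1

lemma cc_single_down (x : Fin (n+1) → K) (k : Fin n) (h : 0 < (k:ℕ)) :
    cc n x (Pi.single k (1:K)) (↑k-1) = 1 - xe n x (↑k-1) := by
  unfold cc
  simp only [ve_single]
  rw [if_neg (by omega), if_pos (by omega)]
  rcases Nat.eq_zero_or_pos (↑k - 1) with h2 | h2
  · rw [if_neg (by omega)]
    ring1
  · rw [if_pos h2, if_neg (by omega)]
    ring1

/-- the common fixed vector when the product of all parameters is `1`. -/
def ww (n : ℕ) (x : Fin (n+1) → K) : Fin n → K := fun k => 1 - pp n x (↑k+1)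

lemma ve_ww (x : Fin (n+1) → K) (m : ℕ) (h : m < n) :
    ve n (ww n x) m = 1 - pp n x (m+1) := by
  rw [ve_of_lt _ h]; rfl

lemma cc_ww (x : Fin (n+1) → K) (hn : 2 ≤ n) (m : ℕ) (hm : m < n) :
    cc n x (ww n x) m = if m+1 = n then (xe n x m - 1) * (1 - pp n x (n+1)) else 0 := by
  unfold cc
  rcases lt_or_ge (m+1) n with h2 | h2
  · rw [ve_ww x m hm, ve_ww x (m+1) h2]
    rcases Nat.eq_zero_or_pos m with h3 | h3
    · subst h3
      rw [if_neg (by omega), if_neg (by omega), pp_succ x (0+1), pp_succ x 0, pp_zero]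
      ring1
    · rw [if_pos h3, ve_ww x (m-1) (by omega), show m - 1 + 1 = m from by omega,
        if_neg (by omega), pp_succ x (m+1), pp_succ x m]
      ring1
  · have h3 : m+1 = n := by omega
    rw [ve_ww x m hm, ve_of_ge _ (by omega), if_pos (show 0 < m by omega),
      ve_ww x (m-1) (by omega), show m - 1 + 1 = m from by omega, if_pos h3]
    have p1 : pp n x (m+1) = pp n x m * xe n x m := pp_succ x m
    have p2 : pp n x (n+1) = pp n x (m+1) * xe n x (m+1) := by
      rw [h3]; exact pp_succ x n
    rw [p2, p1]
    ring1

lemma kernel (hn : 2 ≤ n) (x : Fin (n+1) → K) (h0 : ∀ i, x i ≠ 0) (h1 : ∀ i, x i ≠ 1)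
    (hp : pp n x (n+1) ≠ 1) (v : Fin n → K) (hc : ∀ m, m < n → cc n x v m = 0) :
    v = 0 := by
  have key : ∀ m, m < n → (1 - xe n x 0) * ve n v m = (1 - pp n x (m+1)) * ve n v 0 := by
    intro m
    induction m using Nat.strong_induction_on with
    | _ m ih =>
      intro hm
      match m, ih, hm with
      | 0, ih, hm =>
        rw [show (0:ℕ)+1 = 1 from rfl, pp_one]
      | 1, ih, hm =>
        have h3 := hc 0 (by omega)
        unfold cc at h3
        rw [if_neg (by omega), add_zero] at h3
        rw [show (1:ℕ)+1 = 0+1+1 from rfl, pp_succ x (0+1), pp_succ x 0, pp_zero]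
        rw [show (1:ℕ) = 0+1 from rfl]
        linear_combination h3
      | (k+2), ih, hm =>
        have h3 := hc (k+1) (by omega)
        unfold cc at h3
        rw [if_pos (by omega)] at h3
        rw [show k+1-1 = k from by omega] at h3
        have i1 := ih (k+1) (by omega) (by omega)
        have i2 := ih k (by omega) (by omega)
        have p1 : pp n x (k+1+1) = pp n x (k+1) * xe n x (k+1) := pp_succ x (k+1)
        have p2 : pp n x (k+1+1+1) = pp n x (k+1+1) * xe n x (k+1+1) := pp_succ x (k+1+1)
        rw [show k+2 = k+1+1 from rfl, p2, p1]
        rw [p1] at i1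
        have hA : (1:K) - xe n x (k+1) ≠ 0 :=
          sub_ne_zero.mpr (Ne.symm (xe_ne_one x h1 (by omega)))
        apply mul_left_cancel₀ hA
        linear_combination (1 - xe n x 0) * h3 - (xe n x (k+1) * xe n x (k+1+1) - 1) * i1
          - xe n x (k+1) * (1 - xe n x (k+1+1)) * i2
  have h3 := hc (n-1) (by omega)
  unfold cc at h3
  rw [if_pos (by omega)] at h3
  have e1 : n-1+1 = n := by omega
  rw [e1, ve_of_ge v (le_refl n)] at h3
  have k1 := key (n-1) (by omega)
  rw [e1] at k1
  have k2 := key (n-1-1) (by omega)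
  rw [show n-1-1+1 = n-1 from by omega] at k2
  have p1 : pp n x n = pp n x (n-1) * xe n x (n-1) := by
    have := pp_succ x (n-1); rwa [e1] at this
  have p2 : pp n x (n+1) = pp n x n * xe n x n := pp_succ x n
  have hv0 : (xe n x (n-1) - 1) * (1 - pp n x (n+1)) * ve n v 0 = 0 := by
    rw [p2, p1]
    rw [p1] at k1
    linear_combination (1 - xe n x 0) * h3 - (xe n x (n-1) * xe n x n - 1) * k1
      - xe n x (n-1) * (1 - xe n x n) * k2
  have hne : (xe n x (n-1) - 1) * (1 - pp n x (n+1)) ≠ 0 :=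
    mul_ne_zero (sub_ne_zero.mpr (xe_ne_one x h1 (by omega)))
      (sub_ne_zero.mpr (Ne.symm hp))
  have hv0' : ve n v 0 = 0 := (mul_eq_zero.mp hv0).resolve_left hne
  funext j
  have hj := key ↑j j.isLt
  rw [hv0', mul_zero] at hj
  have h4 : ve n v ↑j = 0 :=
    (mul_eq_zero.mp hj).resolve_left
      (sub_ne_zero.mpr (Ne.symm (xe_ne_one x h1 (by omega))))
  calc v j = ve n v ↑j := (ve_coe v j).symm
    _ = 0 := h4

end Stmt13Aux

/-- For `n ≥ 2`, the group generated by the specialized reduced Gassner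
matrices acts irreducibly on `K^n` (the only invariant subspaces are `0` and `K^n`) if and
only if `x₁ x₂ ⋯ x_{n+1} ≠ 1`. -/


theorem stmt_13 (K : Type*) [Field K] (n : ℕ) (hn : 2 ≤ n)
    (x : Fin (n + 1) → K) (h0 : ∀ i, x i ≠ 0) (h1 : ∀ i, x i ≠ 1)
    (T : Fin n → Matrix (Fin n) (Fin n) K) (hT : IsGassnerMatrices x T) :
    (∀ U : Submodule K (Fin n → K),
        (∀ i : Fin n, ∀ v ∈ U, (T i).mulVec v ∈ U) → U = ⊥ ∨ U = ⊤) ↔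
      ∏ i, x i ≠ 1 := by
  classical
  open Stmt13Aux in
  have hprod : ∏ i, x i = pp n x (n+1) := by
    rw [pp, ← Fin.prod_univ_eq_prod_range (xe n x) (n+1)]
    exact Finset.prod_congr rfl (fun i _ => by rw [xe_lt x i.isLt, Fin.eta])
  rw [hprod]
  constructor
  · -- irreducible → product ≠ 1
    intro hirr hpeq
    have hfix : ∀ i : Fin n, (T i).mulVec (Stmt13Aux.ww n x) = Stmt13Aux.ww n x := by
      intro i
      rw [Stmt13Aux.mulVec_eq hT]
      have hc := Stmt13Aux.cc_ww x hn ↑i i.isLt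
      rw [hpeq] at hc
      have hc0 : Stmt13Aux.cc n x (Stmt13Aux.ww n x) ↑i = 0 := by
        rw [hc]; split <;> ring1
      rw [hc0]
      simp
    have hinv : ∀ i : Fin n, ∀ v ∈ Submodule.span K {Stmt13Aux.ww n x},
        (T i).mulVec v ∈ Submodule.span K {Stmt13Aux.ww n x} := by
      intro i v hv
      rcases Submodule.mem_span_singleton.mp hv with ⟨a, rfl⟩
      rw [Matrix.mulVec_smul, hfix i]
      exact Submodule.smul_mem _ a (Submodule.mem_span_singleton_self _)
    rcases hirr (Submodule.span K {Stmt13Aux.ww n x}) hinv with h | h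
    · rw [Submodule.span_singleton_eq_bot] at h
      have h2 : (1:K) - Stmt13Aux.pp n x (0+1) = 0 := by
        have := congrFun h (⟨0, by omega⟩ : Fin n)
        exact this
      rw [show (0:ℕ)+1 = 1 from rfl, Stmt13Aux.pp_one] at h2
      have h3 : xe n x 0 = 1 := by linear_combination -h2
      exact Stmt13Aux.xe_ne_one x h1 (by omega) h3
    · have m0 : (Pi.single (⟨0, by omega⟩ : Fin n) 1 : Fin n → K)
          ∈ Submodule.span K {Stmt13Aux.ww n x} := h ▸ Submodule.mem_top
      have m1 : (Pi.single (⟨1, by omega⟩ : Fin n) 1 : Fin n → K)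
          ∈ Submodule.span K {Stmt13Aux.ww n x} := h ▸ Submodule.mem_top
      rcases Submodule.mem_span_singleton.mp m0 with ⟨a, ha⟩
      rcases Submodule.mem_span_singleton.mp m1 with ⟨b, hb⟩
      have ha0 := congrFun ha (⟨0, by omega⟩ : Fin n)
      have ha1 := congrFun ha (⟨1, by omega⟩ : Fin n)
      have hb1 := congrFun hb (⟨1, by omega⟩ : Fin n)
      simp only [Pi.smul_apply, smul_eq_mul, Pi.single_apply, Fin.ext_iff] at ha0 ha1 hb1
      norm_num at ha0 ha1 hb1
      have hw1 : Stmt13Aux.ww n x (⟨1, by omega⟩ : Fin n) = 0 := by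
        rcases ha1 with h' | h'
        · exfalso; rw [h', zero_mul] at ha0; exact zero_ne_one ha0
        · exact h'
      rw [hw1, mul_zero] at hb1
      exact zero_ne_one hb1
  · -- product ≠ 1 → irreducible
    intro hp U hU
    by_cases hbot : U = ⊥
    · exact Or.inl hbot
    right
    obtain ⟨v, hvU, hv0⟩ := (Submodule.ne_bot_iff U).mp hbot
    have hsingle : ∀ (i : Fin n) (u : Fin n → K), u ∈ U →
        Stmt13Aux.cc n x u ↑i ≠ 0 → (Pi.single i 1 : Fin n → K) ∈ U := by
      intro i u hu hc
      have h2 : (T i).mulVec u - u ∈ U := U.sub_mem (hU i u hu) hu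
      rw [Stmt13Aux.mulVec_eq hT, add_sub_cancel_left] at h2
      have h3 := U.smul_mem (Stmt13Aux.cc n x u ↑i)⁻¹ h2
      rwa [← Pi.single_smul, smul_eq_mul, inv_mul_cancel₀ hc] at h3
    have hex : ∃ i : Fin n, Stmt13Aux.cc n x v ↑i ≠ 0 := by
      by_contra hall
      push_neg at hall
      exact hv0 (Stmt13Aux.kernel hn x h0 h1 hp v (fun m hm => hall ⟨m, hm⟩))
    obtain ⟨i0, hi0⟩ := hex
    have base : (Pi.single i0 1 : Fin n → K) ∈ U := hsingle i0 v hvU hi0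
    have up : ∀ (k : Fin n) (h : (k:ℕ)+1 < n), (Pi.single k 1 : Fin n → K) ∈ U →
        (Pi.single (⟨↑k+1, h⟩ : Fin n) 1 : Fin n → K) ∈ U := by
      intro k h hk
      apply hsingle ⟨↑k+1, h⟩ _ hk
      have hval : Stmt13Aux.cc n x (Pi.single k 1) ↑(⟨↑k+1, h⟩ : Fin n)
          = xe n x (↑k+1) * (1 - xe n x (↑k+1+1)) := Stmt13Aux.cc_single_up x k h
      rw [hval]
      exact mul_ne_zero (Stmt13Aux.xe_ne_zero x h0 _)
        (sub_ne_zero.mpr (Ne.symm (Stmt13Aux.xe_ne_one x h1 (by omega))))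
    have down : ∀ (k : Fin n) (h : 0 < (k:ℕ)), (Pi.single k 1 : Fin n → K) ∈ U →
        (Pi.single (⟨↑k-1, by omega⟩ : Fin n) 1 : Fin n → K) ∈ U := by
      intro k h hk
      apply hsingle ⟨↑k-1, by omega⟩ _ hk
      have hval : Stmt13Aux.cc n x (Pi.single k 1) ↑(⟨↑k-1, by omega⟩ : Fin n)
          = 1 - xe n x (↑k-1) := Stmt13Aux.cc_single_down x k h
      rw [hval]
      exact sub_ne_zero.mpr (Ne.symm (Stmt13Aux.xe_ne_one x h1 (by omega)))
    have hi0lt := i0.isLt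
    have toZero : ∀ d : ℕ, (Pi.single (⟨↑i0 - d, by omega⟩ : Fin n) 1 : Fin n → K) ∈ U := by
      intro d
      induction d with
      | zero =>
        have e : (⟨↑i0 - 0, by omega⟩ : Fin n) = i0 := Fin.ext (by simp)
        rw [e]; exact base
      | succ d ih =>
        by_cases hd : 0 < ↑i0 - d
        · have h2 := down ⟨↑i0 - d, by omega⟩ hd ih
          have e : (⟨↑(⟨↑i0 - d, by omega⟩ : Fin n) - 1, by omega⟩ : Fin n)
              = (⟨↑i0 - (d+1), by omega⟩ : Fin n) := Fin.ext (by simp; omega)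
          rwa [e] at h2
        · have e : (⟨↑i0 - (d+1), by omega⟩ : Fin n) = (⟨↑i0 - d, by omega⟩ : Fin n) :=
            Fin.ext (by simp; omega)
          rw [e]; exact ih
    have zero_mem : (Pi.single (⟨0, by omega⟩ : Fin n) 1 : Fin n → K) ∈ U := by
      have h2 := toZero ↑i0
      have e : (⟨↑i0 - ↑i0, by omega⟩ : Fin n) = (⟨0, by omega⟩ : Fin n) :=
        Fin.ext (by simp)
      rwa [e] at h2
    have upAll : ∀ m (hm : m < n), (Pi.single (⟨m, hm⟩ : Fin n) 1 : Fin n → K) ∈ U := by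
      intro m
      induction m with
      | zero => intro hm; exact zero_mem
      | succ m ih =>
        intro hm
        have h2 := up ⟨m, by omega⟩ (by exact hm) (ih (by omega))
        exact h2
    rw [Submodule.eq_top_iff']
    intro u
    rw [← Finset.univ_sum_single u]
    apply Submodule.sum_mem
    intro j _
    have e : Pi.single j (u j) = u j • (Pi.single j 1 : Fin n → K) := by
      rw [← Pi.single_smul, smul_eq_mul, mul_one]
    rw [e]
    apply U.smul_mem
    have h2 := upAll ↑j j.isLt
    rwa [Fin.eta] at h2
end

section
/- Let K be a field, n ≥ 1, and x_1, …, x_{n+1} ∈ K with x_i ≠ 0 and x_i ≠ 1 for all i, and suppose x_1 x_2 ⋯ x_{n+1} = 1. Write π_i = x_1 x_2 ⋯ x_i and let w = Σ_{i=1}^{n} (1 − π_i) ε_i ∈ K^n, where ε_1, …, ε_n is the standard basis. Then w ≠ 0 and T_i w = w for every specialized reduced Gassner matrix T_i, 1 ≤ i ≤ n. -/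
private lemma prod_Iic_step {K : Type*} [CommMonoid K] {n : ℕ} (x : Fin (n+1) → K)
    (a b : Fin (n+1)) (hab : (b:ℕ) = (a:ℕ) + 1) :
    ∏ j ∈ Finset.Iic b, x j = (∏ j ∈ Finset.Iic a, x j) * x b := by
  have h : Finset.Iic b = insert b (Finset.Iic a) := by
    ext j
    simp only [Finset.mem_Iic, Finset.mem_insert, Fin.le_def, Fin.ext_iff]
    omega
  rw [h, Finset.prod_insert (by simp only [Finset.mem_Iic, Fin.le_def]; omega), mul_comm]


/-- Suppose `x₁ x₂ ⋯ x_{n+1} = 1`. With `π_i = x₁ x₂ ⋯ x_i`, the vector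
`w = Σᵢ (1 - π_i) εᵢ ∈ K^n` is a nonzero vector fixed by every specialized reduced Gassner
matrix `T i`. -/
theorem stmt_14 (K : Type*) [Field K] (n : ℕ) (hn : 1 ≤ n)
    (x : Fin (n + 1) → K) (h0 : ∀ i, x i ≠ 0) (h1 : ∀ i, x i ≠ 1)
    (hprod : ∏ i, x i = 1)
    (T : Fin n → Matrix (Fin n) (Fin n) K) (hT : IsGassnerMatrices x T)
    (w : Fin n → K) (hw : ∀ i : Fin n, w i = 1 - ∏ j ∈ Finset.Iic i.castSucc, x j) :
    w ≠ 0 ∧ ∀ i : Fin n, (T i).mulVec w = w := by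
  have hM : ∀ (i j k : Fin n), T i j k =
      (if j = k then (if k = i then 0 else 1) else 0) +
      (if j = i then
        (if k = i then x i.castSucc * x i.succ else 0) +
        (if (k:ℕ) + 1 = (i:ℕ) then x i.castSucc * (1 - x i.succ) else 0) +
        (if (k:ℕ) = (i:ℕ) + 1 then 1 - x i.castSucc else 0)
      else 0) := by
    intro i j k
    have h := congrFun (hT i k) j
    simp only [Matrix.mulVec_single, mul_one, ite_apply, Pi.add_apply, Pi.smul_apply,
      Pi.single_apply, smul_eq_mul, MulOpposite.op_one, one_smul, Matrix.col_apply] at h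
    rw [h]; clear h
    clear hT hw h0 h1 hprod w T hn
    split_ifs <;> first | ring1 | (exfalso; omega)
  have hbase : ∀ i : Fin n, (i:ℕ) = 0 → ∏ j ∈ Finset.Iic i.castSucc, x j = x i.castSucc := by
    intro i hi
    have h : Finset.Iic i.castSucc = {i.castSucc} := by
      ext j
      simp only [Finset.mem_Iic, Finset.mem_singleton, Fin.le_def, Fin.ext_iff, Fin.coe_castSucc]
      omega
    rw [h, Finset.prod_singleton]
  constructor
  · intro hzero
    have h := hw ⟨0, hn⟩
    rw [congrFun hzero ⟨0, hn⟩, hbase ⟨0, hn⟩ rfl] at h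
    simp only [Pi.zero_apply] at h
    exact h1 _ (by linear_combination h : x (Fin.castSucc ⟨0, hn⟩) = 1)
  · intro i
    funext j
    have hcoord : (T i).mulVec w j = ∑ k, T i j k * w k := by
      simp [Matrix.mulVec, dotProduct]
    rw [hcoord]
    by_cases hji : j = i
    · subst hji
      -- diagonal row
      have hsplit : ∀ k : Fin n, T j j k * w k =
          (if k = j then (x j.castSucc * x j.succ) * w k else 0) +
          ((if (k:ℕ) + 1 = (j:ℕ) then (x j.castSucc * (1 - x j.succ)) * w k else 0) +
           (if (k:ℕ) = (j:ℕ) + 1 then (1 - x j.castSucc) * w k else 0)) := by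
        intro k
        rw [hM j j k]
        split_ifs <;> first | ring1 | (exfalso; omega)
      rw [Finset.sum_congr rfl (fun k _ => hsplit k), Finset.sum_add_distrib,
        Finset.sum_add_distrib, Finset.sum_ite_eq' Finset.univ j
          (fun k => (x j.castSucc * x j.succ) * w k)]
      simp only [Finset.mem_univ, if_true]
      have e0 : ((j.castSucc : Fin (n+1)) : ℕ) = (j : ℕ) := rfl
      have e1 : ((j.succ : Fin (n+1)) : ℕ) = (j : ℕ) + 1 := rfl
      have hstepP : ∏ l ∈ Finset.Iic j.succ, x l =
          (∏ l ∈ Finset.Iic j.castSucc, x l) * x j.succ :=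
        prod_Iic_step x j.castSucc j.succ (by omega)
      by_cases hj0 : (j : ℕ) = 0 <;> by_cases hjn : (j : ℕ) + 1 = n
      · -- n = 1
        have hS2 : (∑ k : Fin n, if (k:ℕ) + 1 = (j:ℕ) then
            x j.castSucc * (1 - x j.succ) * w k else 0) = 0 :=
          Finset.sum_eq_zero fun k _ => if_neg (by omega)
        have hS3 : (∑ k : Fin n, if (k:ℕ) = (j:ℕ) + 1 then
            (1 - x j.castSucc) * w k else 0) = 0 :=
          Finset.sum_eq_zero fun k _ => if_neg (by omega)
        have huniv : Finset.Iic j.succ = Finset.univ := by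
          ext l
          simp only [Finset.mem_Iic, Finset.mem_univ, iff_true, Fin.le_def]
          omega
        have hab : x j.castSucc * x j.succ = 1 := by
          rw [← hbase j hj0, ← hstepP, huniv, hprod]
        rw [hS2, hS3, hw j, hbase j hj0]
        linear_combination (1 - x j.castSucc) * hab
      · -- j = 0 < n - 1
        have k3 : Fin n := ⟨(j:ℕ) + 1, by omega⟩
        have hS2 : (∑ k : Fin n, if (k:ℕ) + 1 = (j:ℕ) then
            x j.castSucc * (1 - x j.succ) * w k else 0) = 0 :=
          Finset.sum_eq_zero fun k _ => if_neg (by omega)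
        have hS3 : (∑ k : Fin n, if (k:ℕ) = (j:ℕ) + 1 then
            (1 - x j.castSucc) * w k else 0) =
            (1 - x j.castSucc) * w ⟨(j:ℕ) + 1, by omega⟩ := by
          rw [Finset.sum_eq_single (⟨(j:ℕ) + 1, by omega⟩ : Fin n)]
          · rw [if_pos (show (j:ℕ) + 1 = (j:ℕ) + 1 from rfl)]
          · intro k _ hk
            exact if_neg fun hc => hk (Fin.ext (show (k:ℕ) = (j:ℕ) + 1 by omega))
          · intro hmem; exact absurd (Finset.mem_univ _) hmem
        have e3 : (⟨(j:ℕ) + 1, by omega⟩ : Fin n).castSucc = j.succ := by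
          simp [Fin.ext_iff]
        rw [hS2, hS3, hw j, hw ⟨(j:ℕ) + 1, by omega⟩, e3, hstepP, hbase j hj0]
        ring1
      · -- 0 < j = n - 1
        have hS3 : (∑ k : Fin n, if (k:ℕ) = (j:ℕ) + 1 then
            (1 - x j.castSucc) * w k else 0) = 0 :=
          Finset.sum_eq_zero fun k _ => if_neg (by omega)
        have hS2 : (∑ k : Fin n, if (k:ℕ) + 1 = (j:ℕ) then
            x j.castSucc * (1 - x j.succ) * w k else 0) =
            x j.castSucc * (1 - x j.succ) * w ⟨(j:ℕ) - 1, by omega⟩ := by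
          rw [Finset.sum_eq_single (⟨(j:ℕ) - 1, by omega⟩ : Fin n)]
          · rw [if_pos (show (j:ℕ) - 1 + 1 = (j:ℕ) by omega)]
          · intro k _ hk
            exact if_neg fun hc => hk (Fin.ext (show (k:ℕ) = (j:ℕ) - 1 by omega))
          · intro hmem; exact absurd (Finset.mem_univ _) hmem
        have hstep2 : ∏ l ∈ Finset.Iic j.castSucc, x l =
            (∏ l ∈ Finset.Iic (⟨(j:ℕ) - 1, by omega⟩ : Fin n).castSucc, x l) * x j.castSucc :=
          prod_Iic_step x _ _ (show (j:ℕ) = (j:ℕ) - 1 + 1 by omega)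
        have huniv : Finset.Iic j.succ = Finset.univ := by
          ext l
          simp only [Finset.mem_Iic, Finset.mem_univ, iff_true, Fin.le_def]
          omega
        have htop : (∏ l ∈ Finset.Iic j.castSucc, x l) * x j.succ = 1 := by
          rw [← hstepP, huniv, hprod]
        rw [hstep2] at htop
        rw [hS2, hS3, hw j, hw ⟨(j:ℕ) - 1, by omega⟩, hstep2]
        linear_combination (1 - x j.castSucc) * htop
      · -- middle
        have hS2 : (∑ k : Fin n, if (k:ℕ) + 1 = (j:ℕ) then
            x j.castSucc * (1 - x j.succ) * w k else 0) =
            x j.castSucc * (1 - x j.succ) * w ⟨(j:ℕ) - 1, by omega⟩ := by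
          rw [Finset.sum_eq_single (⟨(j:ℕ) - 1, by omega⟩ : Fin n)]
          · rw [if_pos (show (j:ℕ) - 1 + 1 = (j:ℕ) by omega)]
          · intro k _ hk
            exact if_neg fun hc => hk (Fin.ext (show (k:ℕ) = (j:ℕ) - 1 by omega))
          · intro hmem; exact absurd (Finset.mem_univ _) hmem
        have hS3 : (∑ k : Fin n, if (k:ℕ) = (j:ℕ) + 1 then
            (1 - x j.castSucc) * w k else 0) =
            (1 - x j.castSucc) * w ⟨(j:ℕ) + 1, by omega⟩ := by
          rw [Finset.sum_eq_single (⟨(j:ℕ) + 1, by omega⟩ : Fin n)]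
          · rw [if_pos (show (j:ℕ) + 1 = (j:ℕ) + 1 from rfl)]
          · intro k _ hk
            exact if_neg fun hc => hk (Fin.ext (show (k:ℕ) = (j:ℕ) + 1 by omega))
          · intro hmem; exact absurd (Finset.mem_univ _) hmem
        have hstep2 : ∏ l ∈ Finset.Iic j.castSucc, x l =
            (∏ l ∈ Finset.Iic (⟨(j:ℕ) - 1, by omega⟩ : Fin n).castSucc, x l) * x j.castSucc :=
          prod_Iic_step x _ _ (show (j:ℕ) = (j:ℕ) - 1 + 1 by omega)
        have e3 : (⟨(j:ℕ) + 1, by omega⟩ : Fin n).castSucc = j.succ := by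
          simp [Fin.ext_iff]
        have hstep3 : ∏ l ∈ Finset.Iic (⟨(j:ℕ) + 1, by omega⟩ : Fin n).castSucc, x l =
            (∏ l ∈ Finset.Iic j.castSucc, x l) * x j.succ := by rw [e3]; exact hstepP
        rw [hS2, hS3, hw j, hw ⟨(j:ℕ) - 1, by omega⟩, hw ⟨(j:ℕ) + 1, by omega⟩]
        linear_combination (1 - x j.succ) * hstep2 + (x j.castSucc - 1) * hstep3
    · -- off-diagonal row
      have hsplit : ∀ k : Fin n, T i j k * w k = (if j = k then w k else 0) := by
        intro k
        rw [hM i j k]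
        split_ifs <;> first | ring1 | (exfalso; omega)
      rw [Finset.sum_congr rfl (fun k _ => hsplit k), Finset.sum_ite_eq Finset.univ j w]
      simp
end

section
/- Let K be a field, n ≥ 1, and x_1, …, x_{n+1} ∈ K with x_i ≠ 0 and x_i ≠ 1 for all i, and suppose x_1 x_2 ⋯ x_{n+1} = 1. Write π_i = x_1 x_2 ⋯ x_i and let w ∈ K^n be the column vector with entries w_i = 1 − π_i for 1 ≤ i ≤ n. Then h(x_1, …, x_{n+1}) · w = 0; that is, the nonzero vector w lies in the kernel of the matrix h(x_1, …, x_{n+1}), so the skew-hermitian form is degenerate and w is an isotropic null vector orthogonal to all basis vectors. -/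
lemma prod_Iic_succ_aux {K : Type*} [Field K] {n : ℕ} (x : Fin (n + 1) → K) (i : Fin n) :
    ∏ j ∈ Finset.Iic i.succ, x j = (∏ j ∈ Finset.Iic i.castSucc, x j) * x i.succ := by
  rw [← Finset.Iio_insert, Finset.prod_insert (by simp),
    show Finset.Iio (i.succ : Fin (n+1)) = Finset.Iic i.castSucc from by
      ext a; simp [Fin.lt_iff_val_lt_val, Fin.le_iff_val_le_val, Nat.lt_succ_iff]]
  ring

/-- Suppose `x₁ x₂ ⋯ x_{n+1} = 1`. With `π_i = x₁ x₂ ⋯ x_i`, the nonzero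
vector `w` with entries `w_i = 1 - π_i` lies in the kernel of the Gassner form matrix
`h(x₁, …, x_{n+1})`: the skew-hermitian form is degenerate and `w` is an isotropic null
vector orthogonal to all basis vectors. -/
theorem stmt_15 (K : Type*) [Field K] (n : ℕ) (hn : 1 ≤ n)
    (x : Fin (n + 1) → K) (h0 : ∀ i, x i ≠ 0) (h1 : ∀ i, x i ≠ 1)
    (hprod : ∏ i, x i = 1)
    (w : Fin n → K) (hw : ∀ i : Fin n, w i = 1 - ∏ j ∈ Finset.Iic i.castSucc, x j) :
    w ≠ 0 ∧ (gassnerForm x).mulVec w = 0 := by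
  have hne : ∀ i : Fin (n+1), 1 - x i ≠ 0 := fun i => sub_ne_zero.mpr (Ne.symm (h1 i))
  constructor
  · intro hcon
    have h0' := hw ⟨0, hn⟩
    rw [show w ⟨0, hn⟩ = 0 from congrFun hcon _,
      show ((⟨0, hn⟩ : Fin n).castSucc) = 0 from rfl,
      show Finset.Iic (0 : Fin (n+1)) = {0} from by ext a; simp [Fin.le_zero_iff],
      Finset.prod_singleton] at h0'
    exact h1 0 (sub_eq_zero.mp h0'.symm).symm
  · funext i
    show (∑ k, gassnerForm x i k * w k) = 0
    have hsplit : ∀ k : Fin n, gassnerForm x i k * w k =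
        (if (k:ℕ)+1 = (i:ℕ) then (-(x i.castSucc)/(1 - x i.castSucc)) * w k else 0)
      + (if (i:ℕ) = (k:ℕ) then
          ((1 - x i.castSucc * x i.succ) / ((1 - x i.castSucc) * (1 - x i.succ))) * w k else 0)
      + (if (i:ℕ)+1 = (k:ℕ) then (-1/(1 - x k.castSucc)) * w k else 0) := by
      intro k
      unfold gassnerForm
      split_ifs <;> first | ring1 | (exfalso; omega)
    rw [Finset.sum_congr rfl (fun k _ => hsplit k), Finset.sum_add_distrib,
      Finset.sum_add_distrib]
    -- the diagonal term
    have hmid : (∑ k : Fin n, if (i:ℕ) = (k:ℕ) then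
          ((1 - x i.castSucc * x i.succ) / ((1 - x i.castSucc) * (1 - x i.succ))) * w k else 0)
        = ((1 - x i.castSucc * x i.succ) / ((1 - x i.castSucc) * (1 - x i.succ))) * w i := by
      simp only [Fin.val_eq_val]
      rw [Finset.sum_ite_eq]
      simp
    -- the subdiagonal term
    obtain ⟨q, hq1, hq2⟩ : ∃ q : K, (∏ j ∈ Finset.Iic i.castSucc, x j) = q * x i.castSucc ∧
        (∑ k : Fin n, if (k:ℕ)+1 = (i:ℕ) then (-(x i.castSucc)/(1 - x i.castSucc)) * w k else 0)
          = (-(x i.castSucc)/(1 - x i.castSucc)) * (1 - q) := by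
      by_cases hi : 0 < (i:ℕ)
      · set i' : Fin n := ⟨(i:ℕ)-1, by omega⟩ with hi'
        refine ⟨∏ j ∈ Finset.Iic i'.castSucc, x j, ?_, ?_⟩
        · have := prod_Iic_succ_aux x i'
          rwa [show i'.succ = i.castSucc from by
            rw [Fin.ext_iff]; simp [hi']; omega] at this
        · have hcond : ∀ k : Fin n, ((k:ℕ)+1 = (i:ℕ)) ↔ k = i' := by
            intro k; rw [Fin.ext_iff]; simp [hi']; omega
          simp only [hcond]
          rw [Finset.sum_ite_eq']
          simp [hw i']
      · refine ⟨1, ?_, ?_⟩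
        · have h0eq : i.castSucc = 0 := by rw [Fin.ext_iff]; simpa using by omega
          rw [h0eq, show Finset.Iic (0 : Fin (n+1)) = {0} from by
            ext a; simp [Fin.le_zero_iff], Finset.prod_singleton, one_mul]
        · rw [Finset.sum_eq_zero (fun k _ => by rw [if_neg]; omega)]
          simp
    -- the superdiagonal term
    have hright : (∑ k : Fin n, if (i:ℕ)+1 = (k:ℕ) then (-1/(1 - x k.castSucc)) * w k else 0)
        = (-1/(1 - x i.succ)) * (1 - (∏ j ∈ Finset.Iic i.castSucc, x j) * x i.succ) := by
      by_cases hi : (i:ℕ)+1 < n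
      · set k' : Fin n := ⟨(i:ℕ)+1, hi⟩ with hk'
        have hcs : k'.castSucc = i.succ := by rw [Fin.ext_iff]; simp [hk']
        have hcond : ∀ k : Fin n, ((i:ℕ)+1 = (k:ℕ)) ↔ k = k' := by
          intro k; rw [Fin.ext_iff]; simp [hk']; omega
        simp only [hcond]
        rw [Finset.sum_ite_eq']
        simp only [Finset.mem_univ, if_pos, hw k', hcs, prod_Iic_succ_aux x i]
      · have hfull : (∏ j ∈ Finset.Iic i.castSucc, x j) * x i.succ = 1 := by
          rw [← prod_Iic_succ_aux x i,
            show i.succ = Fin.last n from by rw [Fin.ext_iff]; simp; omega,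
            show Finset.Iic (Fin.last n) = Finset.univ from by
              ext a; simp [Fin.le_last], hprod]
        rw [hfull, Finset.sum_eq_zero (fun k _ => by rw [if_neg]; omega)]
        simp
    rw [hmid, hq2, hright, hw i, hq1]
    have ha := hne i.castSucc
    have hb := hne i.succ
    field_simp
    ring
end

section
/- Let K be a field, n ≥ 2, and x_1, …, x_{n+1} ∈ K with x_i ≠ 0 and x_i ≠ 1 for all i, and suppose x_1 x_2 ⋯ x_{n+1} = 1. Write π_i = x_1 x_2 ⋯ x_i and w = Σ_{i=1}^{n} (1 − π_i) ε_i ∈ K^n. Then the K-subspaces of K^n invariant under every specialized reduced Gassner matrix T_i are exactly 0, the line K·w, and K^n; in particular, the induced action of the group generated by T_1, …, T_n on the quotient K^n / K·w is irreducible. -/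
namespace GassnerAux

variable {K : Type*} [Field K] {n : ℕ}

/-- Extension of `x` to `ℕ` by `1`. -/
def xe (x : Fin (n + 1) → K) (m : ℕ) : K := if h : m < n + 1 then x ⟨m, h⟩ else 1

/-- Partial products `π_m = x_0 ⋯ x_{m-1}`. -/
def pprod (x : Fin (n + 1) → K) (m : ℕ) : K := ∏ j ∈ Finset.range m, xe x j

/-- The `i`-th row of the `i`-th Gassner matrix. -/
def gRow (x : Fin (n + 1) → K) (i k : Fin n) : K :=
  if k = i then x i.castSucc * x i.succ
  else if (k : ℕ) + 1 = (i : ℕ) then x i.castSucc * (1 - x i.succ)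
  else if (k : ℕ) = (i : ℕ) + 1 then 1 - x i.castSucc
  else 0

/-- The new `i`-th coordinate after applying `T i`. -/
def S (x : Fin (n + 1) → K) (v : Fin n → K) (i : Fin n) : K := ∑ k, gRow x i k * v k

open Matrix in
theorem entries {x : Fin (n + 1) → K} {T : Fin n → Matrix (Fin n) (Fin n) K}
    (hT : IsGassnerMatrices x T) (i j k : Fin n) :
    T i j k = if j = i then gRow x i k else if j = k then 1 else 0 := by
  have h := congrFun (hT i k) j
  simp only [Matrix.mulVec_single, mul_one, Pi.smul_apply, Matrix.col_apply, op_smul_eq_mul] at h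
  rw [h, gRow]
  simp only [apply_ite (fun f : Fin n → K => f j), Pi.add_apply, Pi.smul_apply,
    Pi.single_apply, smul_eq_mul, Fin.ext_iff]
  split_ifs <;> first | rfl | ring1 | (exfalso; omega)

theorem mulVec_apply {x : Fin (n + 1) → K} {T : Fin n → Matrix (Fin n) (Fin n) K}
    (hT : IsGassnerMatrices x T) (i : Fin n) (v : Fin n → K) (j : Fin n) :
    (T i).mulVec v j = if j = i then S x v i else v j := by
  have : (T i).mulVec v j = ∑ k, T i j k * v k := by
    simp [Matrix.mulVec, dotProduct]
  rw [this]
  by_cases hji : j = i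
  · subst hji
    rw [if_pos rfl, S]
    exact Finset.sum_congr rfl fun k _ => by rw [entries hT, if_pos rfl]
  · rw [if_neg hji]
    have : ∀ k, T i j k * v k = if k = j then v k else 0 := by
      intro k
      rw [entries hT, if_neg hji]
      by_cases hjk : j = k
      · rw [if_pos hjk, if_pos hjk.symm, one_mul]
      · rw [if_neg hjk, if_neg (fun h : k = j => hjk h.symm), zero_mul]
    rw [Finset.sum_congr rfl fun k _ => this k, Finset.sum_ite_eq' Finset.univ j v,
      if_pos (Finset.mem_univ j)]

theorem S_eq (x : Fin (n + 1) → K) (v : Fin n → K) (i : Fin n) :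
    S x v i = x i.castSucc * x i.succ * v i
      + (if h : 0 < (i : ℕ) then
          x i.castSucc * (1 - x i.succ) * v ⟨(i : ℕ) - 1, by omega⟩ else 0)
      + (if h : (i : ℕ) + 1 < n then (1 - x i.castSucc) * v ⟨(i : ℕ) + 1, h⟩ else 0) := by
  have key : ∀ k : Fin n, gRow x i k * v k =
      (if k = i then x i.castSucc * x i.succ * v k else 0)
      + (if (k : ℕ) + 1 = (i : ℕ) then x i.castSucc * (1 - x i.succ) * v k else 0)
      + (if (k : ℕ) = (i : ℕ) + 1 then (1 - x i.castSucc) * v k else 0) := by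
    intro k
    rw [gRow]
    by_cases hki : k = i
    · have e1 : ¬((k : ℕ) + 1 = (i : ℕ)) := by subst hki; omega
      have e2 : ¬((k : ℕ) = (i : ℕ) + 1) := by subst hki; omega
      rw [if_pos hki, if_pos hki, if_neg e1, if_neg e2, add_zero, add_zero]
    · rw [if_neg hki, if_neg hki, zero_add]
      by_cases h2 : (k : ℕ) + 1 = (i : ℕ)
      · have e2 : ¬((k : ℕ) = (i : ℕ) + 1) := by omega
        rw [if_pos h2, if_pos h2, if_neg e2, add_zero]
      · rw [if_neg h2, if_neg h2, zero_add]
        by_cases h3 : (k : ℕ) = (i : ℕ) + 1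
        · rw [if_pos h3, if_pos h3]
        · rw [if_neg h3, if_neg h3, zero_mul]
  rw [S, Finset.sum_congr rfl fun k _ => key k, Finset.sum_add_distrib,
    Finset.sum_add_distrib]
  congr 1
  · congr 1
    · rw [Finset.sum_ite_eq' Finset.univ i, if_pos (Finset.mem_univ i)]
    · by_cases h : 0 < (i : ℕ)
      · rw [dif_pos h]
        have key2 : ∀ k : Fin n, ((k : ℕ) + 1 = (i : ℕ)) ↔
            k = (⟨(i : ℕ) - 1, by omega⟩ : Fin n) := by
          intro k
          rw [Fin.ext_iff]
          show (k : ℕ) + 1 = (i : ℕ) ↔ (k : ℕ) = (i : ℕ) - 1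
          omega
        rw [Finset.sum_congr rfl fun k _ => by rw [if_congr (key2 k) rfl rfl],
          Finset.sum_ite_eq' Finset.univ _ _, if_pos (Finset.mem_univ _)]
      · rw [dif_neg h]
        refine Finset.sum_eq_zero fun k _ => if_neg (by omega)
  · by_cases h : (i : ℕ) + 1 < n
    · rw [dif_pos h]
      have key2 : ∀ k : Fin n, ((k : ℕ) = (i : ℕ) + 1) ↔
          k = (⟨(i : ℕ) + 1, h⟩ : Fin n) := by
        intro k
        rw [Fin.ext_iff]
      rw [Finset.sum_congr rfl fun k _ => by rw [if_congr (key2 k) rfl rfl],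
        Finset.sum_ite_eq' Finset.univ _ _, if_pos (Finset.mem_univ _)]
    · rw [dif_neg h]
      refine Finset.sum_eq_zero fun k _ => if_neg (by intro hk; exact h (hk ▸ k.2))

theorem prod_Iic_eq (x : Fin (n + 1) → K) (i : Fin (n + 1)) :
    ∏ j ∈ Finset.Iic i, x j = pprod x ((i : ℕ) + 1) := by
  rw [pprod]
  refine Finset.prod_bij (fun j _ => (j : ℕ)) ?_ ?_ ?_ ?_
  · intro a ha
    rw [Finset.mem_Iic, Fin.le_def] at ha
    show (a : ℕ) ∈ Finset.range ((i : ℕ) + 1)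
    rw [Finset.mem_range]
    omega
  · intro a _ b _ h
    exact Fin.ext h
  · intro b hb
    rw [Finset.mem_range] at hb
    have hb' : b < n + 1 := by omega
    refine ⟨⟨b, hb'⟩, Finset.mem_Iic.mpr ?_, rfl⟩
    rw [Fin.le_def]
    simpa using Nat.lt_succ_iff.mp hb
  · intro a _
    show x a = xe x ((a : ℕ))
    rw [xe, dif_pos a.2]

theorem pprod_succ (x : Fin (n + 1) → K) (m : ℕ) :
    pprod x (m + 1) = pprod x m * xe x m := Finset.prod_range_succ _ _

theorem xe_val (x : Fin (n + 1) → K) (j : Fin (n + 1)) : xe x ((j : ℕ)) = x j := by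
  rw [xe, dif_pos j.2]

theorem S_w {x : Fin (n + 1) → K} (hpr : pprod x (n + 1) = 1) {w : Fin n → K}
    (hw : ∀ m : ℕ, ∀ hm : m < n, w ⟨m, hm⟩ = 1 - pprod x (m + 1)) (i : Fin n) :
    S x w i = w i := by
  have hc : x i.castSucc = xe x (i : ℕ) := by rw [← xe_val x i.castSucc, Fin.coe_castSucc]
  have hs : x i.succ = xe x ((i : ℕ) + 1) := by rw [← xe_val x i.succ, Fin.val_succ]
  have hwi : w i = 1 - pprod x ((i : ℕ) + 1) := by
    rw [← hw (i : ℕ) i.2, Fin.eta]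
  have p1 : pprod x ((i : ℕ) + 1) = pprod x (i : ℕ) * xe x (i : ℕ) := pprod_succ x _
  have p2 : pprod x ((i : ℕ) + 1 + 1) = pprod x ((i : ℕ) + 1) * xe x ((i : ℕ) + 1) :=
    pprod_succ x _
  rw [S_eq, hc, hs, hwi]
  split_ifs with hA hB hB
  · -- 0 < i and i+1 < n
    rw [hw ((i : ℕ) - 1) (by omega), hw ((i : ℕ) + 1) hB,
      show (i : ℕ) - 1 + 1 = (i : ℕ) from by omega]
    linear_combination (1 - xe x ((i : ℕ) + 1)) * p1 + (xe x (i : ℕ) - 1) * p2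
  · -- 0 < i and i+1 = n
    rw [hw ((i : ℕ) - 1) (by omega), show (i : ℕ) - 1 + 1 = (i : ℕ) from by omega]
    have hl : pprod x ((i : ℕ) + 1) * xe x ((i : ℕ) + 1) = 1 := by
      rw [← p2, show (i : ℕ) + 1 + 1 = n + 1 from by omega, hpr]
    linear_combination (1 - xe x ((i : ℕ) + 1)) * p1 + (1 - xe x (i : ℕ)) * hl
  · -- i = 0 and i+1 < n
    have e0 : (i : ℕ) = 0 := by omega
    have q1 : pprod x (0 + 1) = xe x 0 := by
      rw [pprod_succ]
      show pprod x 0 * xe x 0 = xe x 0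
      rw [pprod, Finset.prod_range_zero, one_mul]
    rw [hw ((i : ℕ) + 1) hB]
    simp only [e0] at *
    linear_combination (1 - xe x (0 + 1)) * q1 + (xe x 0 - 1) * p2
  · -- i = 0 and n = 1
    have e0 : (i : ℕ) = 0 := by omega
    have q1 : pprod x (0 + 1) = xe x 0 := by
      rw [pprod_succ]
      show pprod x 0 * xe x 0 = xe x 0
      rw [pprod, Finset.prod_range_zero, one_mul]
    have hl : pprod x ((i : ℕ) + 1) * xe x ((i : ℕ) + 1) = 1 := by
      rw [← p2, show (i : ℕ) + 1 + 1 = n + 1 from by omega, hpr]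
    simp only [e0] at *
    linear_combination xe x (0 + 1) * (pprod x (0 + 1) - 1) * q1
      + (1 - pprod x (0 + 1)) * hl

theorem S_sub_smul (x : Fin (n + 1) → K) (v u : Fin n → K) (c : K) (i : Fin n) :
    S x (v - c • u) i = S x v i - c * S x u i := by
  rw [S, S, S, Finset.mul_sum, ← Finset.sum_sub_distrib]
  refine Finset.sum_congr rfl fun k _ => ?_
  simp only [Pi.sub_apply, Pi.smul_apply, smul_eq_mul]
  ring

theorem uniq {x : Fin (n + 1) → K} (h1 : ∀ i, x i ≠ 1) (hn : 0 < n) (u : Fin n → K)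
    (hu : ∀ i, S x u i = u i) (hz : u ⟨0, hn⟩ = 0) : u = 0 := by
  have key : ∀ m, ∀ hm : m < n, u ⟨m, hm⟩ = 0 := by
    intro m
    induction m using Nat.strong_induction_on with
    | _ m IH =>
      intro hm
      match m, hm with
      | 0, hm => exact hz
      | (k + 1), hm =>
        have hk : k < n := by omega
        have h : x (⟨k, hk⟩ : Fin n).castSucc * x (⟨k, hk⟩ : Fin n).succ * u ⟨k, hk⟩
            + (if h : 0 < k then
                x (⟨k, hk⟩ : Fin n).castSucc * (1 - x (⟨k, hk⟩ : Fin n).succ)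
                  * u ⟨k - 1, by omega⟩ else 0)
            + (if h : k + 1 < n then
                (1 - x (⟨k, hk⟩ : Fin n).castSucc) * u ⟨k + 1, h⟩ else 0)
            = u ⟨k, hk⟩ := by
          have h' := hu ⟨k, hk⟩
          rw [S_eq] at h'
          exact h'
        rw [IH k (by omega) hk, dif_pos hm, mul_zero, zero_add] at h
        have hmid : (if h : 0 < k then
            x (⟨k, hk⟩ : Fin n).castSucc * (1 - x (⟨k, hk⟩ : Fin n).succ)
              * u ⟨k - 1, by omega⟩ else 0) = 0 := by
          split_ifs with h'
          · rw [IH (k - 1) (by omega) (by omega), mul_zero]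
          · rfl
        rw [hmid, zero_add] at h
        rcases mul_eq_zero.mp h with h | h
        · exact absurd (by linear_combination -h) (h1 (⟨k, hk⟩ : Fin n).castSucc)
        · exact h
  funext j
  have h := key (j : ℕ) j.2
  rw [Fin.eta] at h
  exact h

theorem mulVec_sub {x : Fin (n + 1) → K} {T : Fin n → Matrix (Fin n) (Fin n) K}
    (hT : IsGassnerMatrices x T) (i : Fin n) (v : Fin n → K) :
    (T i).mulVec v - v = (S x v i - v i) • (Pi.single i 1 : Fin n → K) := by
  funext j
  rw [Pi.sub_apply, mulVec_apply hT, Pi.smul_apply, Pi.single_apply, smul_eq_mul]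
  by_cases hji : j = i
  · subst hji
    rw [if_pos rfl, if_pos rfl, mul_one]
  · rw [if_neg hji, if_neg hji, mul_zero, sub_self]

theorem T_fix_w {x : Fin (n + 1) → K} {T : Fin n → Matrix (Fin n) (Fin n) K}
    (hT : IsGassnerMatrices x T) (hpr : pprod x (n + 1) = 1) {w : Fin n → K}
    (hw : ∀ m : ℕ, ∀ hm : m < n, w ⟨m, hm⟩ = 1 - pprod x (m + 1)) (i : Fin n) :
    (T i).mulVec w = w := by
  funext j
  rw [mulVec_apply hT]
  by_cases hji : j = i
  · subst hji
    rw [if_pos rfl, S_w hpr hw]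
  · rw [if_neg hji]

theorem step_up {x : Fin (n + 1) → K} {T : Fin n → Matrix (Fin n) (Fin n) K}
    (hT : IsGassnerMatrices x T) (h0 : ∀ i, x i ≠ 0) (h1 : ∀ i, x i ≠ 1)
    {U : Submodule K (Fin n → K)} (hU : ∀ i : Fin n, ∀ v ∈ U, (T i).mulVec v ∈ U)
    (m : ℕ) (hm : m < n) (hmem : Pi.single (⟨m, hm⟩ : Fin n) (1 : K) ∈ U)
    (hm1 : m + 1 < n) : Pi.single (⟨m + 1, hm1⟩ : Fin n) (1 : K) ∈ U := by
  have hcol := hT (⟨m + 1, hm1⟩ : Fin n) (⟨m, hm⟩ : Fin n)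
  have c1 : ¬(⟨m, hm⟩ : Fin n) = (⟨m + 1, hm1⟩ : Fin n) := by
    rw [Fin.ext_iff, Fin.val_mk, Fin.val_mk]
    omega
  have c2 : (((⟨m, hm⟩ : Fin n) : ℕ)) + 1 = (((⟨m + 1, hm1⟩ : Fin n) : ℕ)) := by
    rw [Fin.val_mk, Fin.val_mk]
  rw [if_neg c1, if_pos c2] at hcol
  have hmem2 := hU (⟨m + 1, hm1⟩ : Fin n) _ hmem
  rw [hcol] at hmem2
  have hsub := U.sub_mem hmem2 hmem
  rw [add_sub_cancel_left] at hsub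
  have hne : x (⟨m + 1, hm1⟩ : Fin n).castSucc * (1 - x (⟨m + 1, hm1⟩ : Fin n).succ) ≠ 0 :=
    mul_ne_zero (h0 _) (sub_ne_zero_of_ne (Ne.symm (h1 _)))
  have := U.smul_mem (x (⟨m + 1, hm1⟩ : Fin n).castSucc
    * (1 - x (⟨m + 1, hm1⟩ : Fin n).succ))⁻¹ hsub
  rwa [smul_smul, inv_mul_cancel₀ hne, one_smul] at this

theorem step_down {x : Fin (n + 1) → K} {T : Fin n → Matrix (Fin n) (Fin n) K}
    (hT : IsGassnerMatrices x T) (h0 : ∀ i, x i ≠ 0) (h1 : ∀ i, x i ≠ 1)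
    {U : Submodule K (Fin n → K)} (hU : ∀ i : Fin n, ∀ v ∈ U, (T i).mulVec v ∈ U)
    (m : ℕ) (hm : m < n) (hmem : Pi.single (⟨m, hm⟩ : Fin n) (1 : K) ∈ U)
    (hpos : 0 < m) (hm' : m - 1 < n) : Pi.single (⟨m - 1, hm'⟩ : Fin n) (1 : K) ∈ U := by
  have hcol := hT (⟨m - 1, hm'⟩ : Fin n) (⟨m, hm⟩ : Fin n)
  have c1 : ¬(⟨m, hm⟩ : Fin n) = (⟨m - 1, hm'⟩ : Fin n) := by
    rw [Fin.ext_iff, Fin.val_mk, Fin.val_mk]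
    omega
  have c2 : ¬((((⟨m, hm⟩ : Fin n) : ℕ)) + 1 = (((⟨m - 1, hm'⟩ : Fin n) : ℕ))) := by
    rw [Fin.val_mk, Fin.val_mk]
    omega
  have c3 : (((⟨m, hm⟩ : Fin n) : ℕ)) = (((⟨m - 1, hm'⟩ : Fin n) : ℕ)) + 1 := by
    rw [Fin.val_mk, Fin.val_mk]
    omega
  rw [if_neg c1, if_neg c2, if_pos c3] at hcol
  have hmem2 := hU (⟨m - 1, hm'⟩ : Fin n) _ hmem
  rw [hcol] at hmem2
  have hsub := U.sub_mem hmem2 hmem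
  rw [add_sub_cancel_right] at hsub
  have hne : (1 : K) - x (⟨m - 1, hm'⟩ : Fin n).castSucc ≠ 0 :=
    sub_ne_zero_of_ne (Ne.symm (h1 _))
  have := U.smul_mem ((1 : K) - x (⟨m - 1, hm'⟩ : Fin n).castSucc)⁻¹ hsub
  rwa [smul_smul, inv_mul_cancel₀ hne, one_smul] at this

theorem eq_top {x : Fin (n + 1) → K} {T : Fin n → Matrix (Fin n) (Fin n) K}
    (hT : IsGassnerMatrices x T) (h0 : ∀ i, x i ≠ 0) (h1 : ∀ i, x i ≠ 1)
    {U : Submodule K (Fin n → K)} (hU : ∀ i : Fin n, ∀ v ∈ U, (T i).mulVec v ∈ U)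
    (i0 : Fin n) (hmem : Pi.single i0 (1 : K) ∈ U) : U = ⊤ := by
  have hn : 0 < n := i0.pos
  have down : ∀ j : ℕ, j ≤ (i0 : ℕ) → ∀ hj : (i0 : ℕ) - j < n,
      Pi.single (⟨(i0 : ℕ) - j, hj⟩ : Fin n) (1 : K) ∈ U := by
    intro j
    induction j with
    | zero =>
      intro _ hj
      have e : (⟨(i0 : ℕ) - 0, hj⟩ : Fin n) = i0 := by
        rw [Fin.ext_iff, Fin.val_mk]
        omega
      rw [e]
      exact hmem
    | succ j IH =>
      intro hle hj
      have hb : (i0 : ℕ) - j < n := by omega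
      have hprev := IH (by omega) hb
      have hstep := step_down hT h0 h1 hU _ hb hprev (by omega) (by omega)
      have e : (⟨(i0 : ℕ) - j - 1, by omega⟩ : Fin n) = (⟨(i0 : ℕ) - (j + 1), hj⟩ : Fin n) := by
        simp only [Fin.mk.injEq]
        omega
      rw [e] at hstep
      exact hstep
  have h00 : Pi.single (⟨0, hn⟩ : Fin n) (1 : K) ∈ U := by
    have h := down (i0 : ℕ) le_rfl (by omega)
    have e : (⟨(i0 : ℕ) - (i0 : ℕ), by omega⟩ : Fin n) = (⟨0, hn⟩ : Fin n) := by
      simp only [Fin.mk.injEq]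
      omega
    rw [e] at h
    exact h
  have up : ∀ m : ℕ, ∀ hm : m < n, Pi.single (⟨m, hm⟩ : Fin n) (1 : K) ∈ U := by
    intro m
    induction m with
    | zero => intro hm; exact h00
    | succ k IH =>
      intro hm
      exact step_up hT h0 h1 hU k (by omega) (IH (by omega)) hm
  rw [eq_top_iff]
  intro v _
  have hv : v = ∑ j : Fin n, v j • (Pi.single j 1 : Fin n → K) := by
    have e : ∀ j : Fin n, v j • (Pi.single j 1 : Fin n → K) = Pi.single j (v j) := by
      intro j
      rw [← Pi.single_smul, smul_eq_mul, mul_one]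
    rw [Finset.sum_congr rfl fun j _ => e j, Finset.univ_sum_single]
  rw [hv]
  refine Submodule.sum_mem U fun j _ => Submodule.smul_mem U _ ?_
  have h := up (j : ℕ) j.2
  rwa [Fin.eta] at h

end GassnerAux

/-- For `n ≥ 2` and `x₁ x₂ ⋯ x_{n+1} = 1`, with
`w = Σᵢ (1 - π_i) εᵢ` (`π_i = x₁ ⋯ x_i`), the subspaces of `K^n` invariant under all the
specialized reduced Gassner matrices are exactly `0`, the line `K • w`, and `K^n`; in
particular the induced action on the quotient `K^n / K • w` is irreducible. -/
theorem stmt_16 (K : Type*) [Field K] (n : ℕ) (hn : 2 ≤ n)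
    (x : Fin (n + 1) → K) (h0 : ∀ i, x i ≠ 0) (h1 : ∀ i, x i ≠ 1)
    (hprod : ∏ i, x i = 1)
    (T : Fin n → Matrix (Fin n) (Fin n) K) (hT : IsGassnerMatrices x T)
    (w : Fin n → K) (hw : ∀ i : Fin n, w i = 1 - ∏ j ∈ Finset.Iic i.castSucc, x j) :
    (∀ U : Submodule K (Fin n → K),
      (∀ i : Fin n, ∀ v ∈ U, (T i).mulVec v ∈ U) ↔
        (U = ⊥ ∨ U = Submodule.span K {w} ∨ U = ⊤)) ∧
    (∀ U : Submodule K (Fin n → K), Submodule.span K {w} ≤ U →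
      (∀ i : Fin n, ∀ v ∈ U, (T i).mulVec v ∈ U) →
      U = Submodule.span K {w} ∨ U = ⊤) := by
  have hn0 : 0 < n := by omega
  have hpr : GassnerAux.pprod x (n + 1) = 1 := by
    calc GassnerAux.pprod x (n + 1)
        = ∏ i : Fin (n + 1), GassnerAux.xe x (i : ℕ) :=
          (Fin.prod_univ_eq_prod_range (GassnerAux.xe x) (n + 1)).symm
      _ = ∏ i, x i := Finset.prod_congr rfl fun i _ => GassnerAux.xe_val x i
      _ = 1 := hprod
  have hw' : ∀ (m : ℕ) (hm : m < n), w ⟨m, hm⟩ = 1 - GassnerAux.pprod x (m + 1) := by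
    intro m hm
    rw [hw ⟨m, hm⟩, GassnerAux.prod_Iic_eq]
    congr 2
  have hq1 : GassnerAux.pprod x 1 = x ⟨0, Nat.succ_pos n⟩ := by
    rw [GassnerAux.pprod, Finset.prod_range_one, GassnerAux.xe, dif_pos (Nat.succ_pos n)]
  have hw0 : w ⟨0, hn0⟩ ≠ 0 := by
    rw [hw' 0 hn0, show (0 : ℕ) + 1 = 1 from rfl, hq1]
    exact sub_ne_zero_of_ne (Ne.symm (h1 _))
  have main : ∀ U : Submodule K (Fin n → K),
      (∀ i : Fin n, ∀ v ∈ U, (T i).mulVec v ∈ U) ↔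
        (U = ⊥ ∨ U = Submodule.span K {w} ∨ U = ⊤) := by
    intro U
    constructor
    · intro hU
      by_cases hS : ∀ v ∈ U, ∀ i : Fin n, GassnerAux.S x v i = v i
      · -- U ≤ span K {w}
        have hle : U ≤ Submodule.span K {w} := by
          intro v hv
          rw [Submodule.mem_span_singleton]
          refine ⟨v ⟨0, hn0⟩ / w ⟨0, hn0⟩, ?_⟩
          have hzero : v - (v ⟨0, hn0⟩ / w ⟨0, hn0⟩) • w = 0 := by
            apply GassnerAux.uniq h1 hn0
            · intro i
              rw [GassnerAux.S_sub_smul, hS v hv i, GassnerAux.S_w hpr hw' i]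
              simp [Pi.sub_apply, Pi.smul_apply, smul_eq_mul]
            · rw [Pi.sub_apply, Pi.smul_apply, smul_eq_mul,
                div_mul_cancel₀ _ hw0, sub_self]
          have := sub_eq_zero.mp hzero
          exact this.symm
        by_cases hbot : U = ⊥
        · exact Or.inl hbot
        · refine Or.inr (Or.inl (le_antisymm hle ?_))
          obtain ⟨u, huU, hune⟩ := Submodule.ne_bot_iff U |>.mp hbot
          obtain ⟨c, hc⟩ := Submodule.mem_span_singleton.mp (hle huU)
          have hcne : c ≠ 0 := by
            rintro rfl
            rw [zero_smul] at hc
            exact hune hc.symm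
          rw [Submodule.span_le, Set.singleton_subset_iff]
          have hwu : w = c⁻¹ • u := by
            rw [← hc, smul_smul, inv_mul_cancel₀ hcne, one_smul]
          rw [hwu]
          exact U.smul_mem _ huU
      · push_neg at hS
        obtain ⟨v, hv, i, hSvi⟩ := hS
        refine Or.inr (Or.inr ?_)
        have hdiff : (GassnerAux.S x v i - v i) • (Pi.single i 1 : Fin n → K) ∈ U := by
          rw [← GassnerAux.mulVec_sub hT]
          exact U.sub_mem (hU i v hv) hv
        have hne : GassnerAux.S x v i - v i ≠ 0 := sub_ne_zero_of_ne hSvi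
        have hsing : (Pi.single i 1 : Fin n → K) ∈ U := by
          have := U.smul_mem (GassnerAux.S x v i - v i)⁻¹ hdiff
          rwa [smul_smul, inv_mul_cancel₀ hne, one_smul] at this
        exact GassnerAux.eq_top hT h0 h1 hU i hsing
    · rintro (rfl | rfl | rfl)
      · intro i v hv
        rw [Submodule.mem_bot] at hv ⊢
        rw [hv, Matrix.mulVec_zero]
      · intro i v hv
        rw [Submodule.mem_span_singleton] at hv ⊢
        obtain ⟨c, rfl⟩ := hv
        exact ⟨c, by rw [Matrix.mulVec_smul, GassnerAux.T_fix_w hT hpr hw']⟩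
      · intro i v _
        exact Submodule.mem_top
  refine ⟨main, fun U hle hU => ?_⟩
  rcases (main U).mp hU with h | h | h
  · left
    rw [h] at hle ⊢
    exact (le_bot_iff.mp hle).symm
  · exact Or.inl h
  · exact Or.inr h
end
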